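/- arXiv:1707.09339 — 8 statements merged into one kernel-verified Lean document; each statement's English description precedes it below -/
import Mathlib

section
/- Let A ⊆ B be a unital C*-inclusion and suppose E : B → A is a conditional expectation which is unique, i.e., every conditional expectation F : B → A equals E. Then E is multiplicative on the relative commutant: for all x, y ∈ B with x a = a x and y a = a y for every a ∈ A, one has E(x y) = E(x) E(y). -/
section AuxGeneral

variable {B : Type*} [CStarAlgebra B]

/-- In a C*-algebra, if a finite sum of elements `star (x k) * x k` vanishes, each `x k = 0`. -/
lemma sum_star_mul_self_eq_zero' {ι : Type*} (s : Finset ι) (x : ι → B)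
    (h : ∑ k ∈ s, star (x k) * x k = 0) : ∀ k ∈ s, x k = 0 := by
  letI := CStarAlgebra.spectralOrder B
  haveI := CStarAlgebra.spectralOrderedRing B
  intro k hk
  have h0 : ∀ j ∈ s, (0 : B) ≤ star (x j) * x j := fun j _ => star_mul_self_nonneg (x j)
  have hz := (Finset.sum_eq_zero_iff_of_nonneg h0).mp h k hk
  exact (CStarRing.star_mul_self_eq_zero_iff _).mp hz

/-- For a selfadjoint `h` and any `t` with `‖h‖ ≤ t`, the element `h + t•1` is of the form
`star w * w` with `w` a continuous function of `h`. -/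
lemma exists_star_mul_self_of_selfAdjoint' [Nontrivial B] {h : B} (hh : IsSelfAdjoint h)
    {t : ℝ} (ht : ‖h‖ ≤ t) :
    IsSelfAdjoint (cfc (fun u : ℝ => Real.sqrt (u + t)) h) ∧
      star (cfc (fun u : ℝ => Real.sqrt (u + t)) h) * cfc (fun u : ℝ => Real.sqrt (u + t)) h
        = h + algebraMap ℝ B t := by
  refine ⟨cfc_predicate _ h, ?_⟩
  have hsa : IsSelfAdjoint (cfc (fun u : ℝ => Real.sqrt (u + t)) h) := cfc_predicate _ h
  rw [hsa.star_eq]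
  have hcont : ContinuousOn (fun u : ℝ => Real.sqrt (u + t)) (spectrum ℝ h) :=
    (Real.continuous_sqrt.comp (continuous_id.add continuous_const)).continuousOn
  rw [← cfc_mul _ _ h hcont hcont]
  have heq : cfc (fun u : ℝ => Real.sqrt (u + t) * Real.sqrt (u + t)) h
      = cfc (fun u : ℝ => u + t) h := by
    apply cfc_congr
    intro u hu
    have hb : ‖u‖ ≤ ‖h‖ := spectrum.norm_le_norm_of_mem hu
    have h0 : 0 ≤ u + t := by
      have := abs_le.mp (le_trans (le_of_eq (Real.norm_eq_abs u).symm) (hb.trans ht))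
      linarith [this.1]
    exact Real.mul_self_sqrt h0
  rw [heq]
  simpa [cfc_id' ℝ h] using cfc_add_const t (fun u : ℝ => u) h

/-- The centralizer star subalgebra is closed. -/
lemma isClosed_starCentralizer (s : Set B) :
    IsClosed ((StarSubalgebra.centralizer ℂ s : StarSubalgebra ℂ B) : Set B) := by
  rw [StarSubalgebra.coe_centralizer]
  have hrw : (s ∪ star s).centralizer = ⋂ m ∈ (s ∪ star s), {z : B | m * z = z * m} := by
    ext z
    simp [Set.mem_centralizer_iff]
  rw [hrw]
  exact isClosed_biInter fun m _ =>
    isClosed_eq (continuous_const.mul continuous_id) (continuous_id.mul continuous_const)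

/-- Real continuous functional calculus lands in the elemental star algebra. -/
lemma cfc_mem_elemental' (a : B) (ha : IsSelfAdjoint a) (f : ℝ → ℝ) :
    cfc f a ∈ StarAlgebra.elemental ℂ a := by
  by_cases hf : ContinuousOn f (spectrum ℝ a)
  · rw [cfc_real_eq_complex f ha]
    by_cases hf' : ContinuousOn (fun x : ℂ => (f x.re : ℂ)) (spectrum ℂ a)
    · rw [cfc_apply _ a ha.isStarNormal hf', cfcHom_eq_of_isStarNormal]
      simp only [StarAlgHom.comp_apply, StarSubalgebra.coe_subtype]
      exact SetLike.coe_mem _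
    · rw [cfc_apply_of_not_continuousOn a hf']
      exact zero_mem _
  · rw [cfc_apply_of_not_continuousOn a hf]
    exact zero_mem _

/-- cfc of a selfadjoint element commutes with anything the element (and its star) commutes
with. -/
lemma commute_cfc' (a c : B) (ha : IsSelfAdjoint a) (h1 : c * a = a * c)
    (h2 : star c * a = a * star c) (f : ℝ → ℝ) : Commute (cfc f a) c := by
  have hc : a ∈ StarSubalgebra.centralizer ℂ ({c} : Set B) := by
    rw [StarSubalgebra.mem_centralizer_iff]
    rintro g hg
    rw [Set.mem_singleton_iff] at hg
    subst hg
    exact ⟨h1, h2⟩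
  have hle : StarAlgebra.elemental ℂ a ≤ StarSubalgebra.centralizer ℂ ({c} : Set B) :=
    StarAlgebra.elemental.le_of_mem (isClosed_starCentralizer _) hc
  have hmem := hle (cfc_mem_elemental' a ha f)
  rw [StarSubalgebra.mem_centralizer_iff] at hmem
  have := (hmem c (Set.mem_singleton c)).1
  exact this.symm

end AuxGeneral

open Matrix in
/-- A conditional expectation for a unital C*-inclusion `A ⊆ B`: a bounded linear map
`E : B → B` taking values in `A`, restricting to the identity on `A`, `A`-bimodular, and
completely positive (positive matrices over `B` are sent to positive matrices). -/
structure IsCondExp {B : Type*} [CStarAlgebra B]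
    (A : StarSubalgebra ℂ B) (E : B → B) : Prop where
  boundedLinear : IsBoundedLinearMap ℂ E
  mem_of : ∀ x : B, E x ∈ A
  fixes : ∀ a ∈ A, E a = a
  bimodular : ∀ (x : B), ∀ a ∈ A, ∀ b ∈ A, E (a * x * b) = a * E x * b
  completelyPositive : ∀ (n : ℕ) (M : Matrix (Fin n) (Fin n) B),
    (∃ N : Matrix (Fin n) (Fin n) B, M = Nᴴ * N) →
      ∃ P : Matrix (Fin n) (Fin n) B, M.map E = Pᴴ * P

namespace IsCondExp

variable {B : Type*} [CStarAlgebra B] {A : StarSubalgebra ℂ B} {E : B → B}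

lemma map_add' (hE : IsCondExp A E) (x y : B) : E (x + y) = E x + E y :=
  hE.boundedLinear.toIsLinearMap.map_add x y

lemma map_smul' (hE : IsCondExp A E) (c : ℂ) (x : B) : E (c • x) = c • E x :=
  hE.boundedLinear.toIsLinearMap.map_smul c x

lemma map_sub' (hE : IsCondExp A E) (x y : B) : E (x - y) = E x - E y := by
  have h : x - y = x + (-1 : ℂ) • y := by simp [sub_eq_add_neg]
  rw [h, hE.map_add', hE.map_smul']
  simp [sub_eq_add_neg]

lemma map_one' (hE : IsCondExp A E) : E 1 = 1 := hE.fixes 1 (one_mem A)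

lemma algebraMap_real_mem (A : StarSubalgebra ℂ B) (t : ℝ) : algebraMap ℝ B t ∈ A := by
  rw [IsScalarTower.algebraMap_apply ℝ ℂ B]
  exact algebraMap_mem A _

/-- `E` maps `star w * w` to an element of the same form (positivity, `n = 1` case). -/
lemma star_mul_self_map (hE : IsCondExp A E) (w : B) : ∃ u : B, E (star w * w) = star u * u := by
  obtain ⟨P, hP⟩ := hE.completelyPositive 1 (Matrix.of fun _ _ => star w * w)
    ⟨Matrix.of fun _ _ => w, by
      ext i j
      simp [Matrix.mul_apply, Matrix.conjTranspose_apply]⟩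
  refine ⟨P 0 0, ?_⟩
  have h := congrFun (congrFun hP 0) 0
  simpa [Matrix.map_apply, Matrix.mul_apply, Matrix.conjTranspose_apply] using h

lemma isSelfAdjoint_map (hE : IsCondExp A E) {h : B} (hh : IsSelfAdjoint h) :
    IsSelfAdjoint (E h) := by
  rcases subsingleton_or_nontrivial B with hB | hB
  · exact Subsingleton.elim _ _
  obtain ⟨-, hw⟩ := exists_star_mul_self_of_selfAdjoint' hh (le_refl ‖h‖)
  obtain ⟨u, hu⟩ := hE.star_mul_self_map _
  rw [hw] at hu
  have hfix : E (algebraMap ℝ B ‖h‖) = algebraMap ℝ B ‖h‖ :=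
    hE.fixes _ (algebraMap_real_mem A ‖h‖)
  have hEh : E h = star u * u - algebraMap ℝ B ‖h‖ := by
    rw [hE.map_add', hfix] at hu
    exact eq_sub_of_add_eq hu
  rw [hEh]
  have h1 : IsSelfAdjoint (algebraMap ℝ B ‖h‖) := IsSelfAdjoint.algebraMap B (star_trivial _)
  exact (IsSelfAdjoint.star_mul_self u).sub h1

lemma map_star' (hE : IsCondExp A E) (x : B) : E (star x) = star (E x) := by
  have hhsa : IsSelfAdjoint (x + star x) := IsSelfAdjoint.add_star_self x
  have hgsa : IsSelfAdjoint (Complex.I • x - Complex.I • star x) := by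
    rw [IsSelfAdjoint, star_sub, star_smul, star_smul, star_star, Complex.star_def,
      Complex.conj_I, neg_smul, neg_smul, sub_neg_eq_add, neg_add_eq_sub]
  have hEh := hE.isSelfAdjoint_map hhsa
  have hEg := hE.isSelfAdjoint_map hgsa
  have hx : x = (2⁻¹ : ℂ) • (x + star x) - (2⁻¹ * Complex.I : ℂ) • (Complex.I • x - Complex.I • star x) := by
    have hI : (Complex.I * Complex.I : ℂ) = -1 := Complex.I_mul_I
    rw [smul_sub, smul_smul, smul_smul, mul_assoc, hI, smul_add]
    module
  have hsx : star x = (2⁻¹ : ℂ) • (x + star x) + (2⁻¹ * Complex.I : ℂ) • (Complex.I • x - Complex.I • star x) := by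
    have hI : (Complex.I * Complex.I : ℂ) = -1 := Complex.I_mul_I
    rw [smul_sub, smul_smul, smul_smul, mul_assoc, hI, smul_add]
    module
  have e1 : E (star x) = (2⁻¹ : ℂ) • E (x + star x) + (2⁻¹ * Complex.I : ℂ) • E (Complex.I • x - Complex.I • star x) := by
    conv_lhs => rw [hsx]
    rw [hE.map_add', hE.map_smul', hE.map_smul']
  have e2 : E x = (2⁻¹ : ℂ) • E (x + star x) - (2⁻¹ * Complex.I : ℂ) • E (Complex.I • x - Complex.I • star x) := by
    conv_lhs => rw [hx]
    rw [hE.map_sub', hE.map_smul', hE.map_smul']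
  rw [e1, e2, star_sub, star_smul, star_smul, hEh.star_eq, hEg.star_eq, Complex.star_def]
  have c1 : (starRingEnd ℂ) (2⁻¹ : ℂ) = 2⁻¹ := by simp [map_ofNat]
  have c2 : (starRingEnd ℂ) (2⁻¹ * Complex.I : ℂ) = -(2⁻¹ * Complex.I) := by
    simp [Complex.conj_I, map_ofNat]
  rw [c1, c2, neg_smul, sub_neg_eq_add]

end IsCondExp

namespace IsCondExp

variable {B : Type*} [CStarAlgebra B] {A : StarSubalgebra ℂ B} {E : B → B}

/-- The multiplicative domain property: if `E (star c * c) = star (E c) * E c`, then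
`E (star c * b) = star (E c) * E b` for every `b`. -/
lemma mul_domain (hE : IsCondExp A E) (c : B)
    (hc : E (star c * c) = star (E c) * E c) (b : B) :
    E (star c * b) = star (E c) * E b := by
  classical
  set a : Fin 3 → B := ![1, c, b] with ha
  obtain ⟨P, hP⟩ := hE.completelyPositive 3 (Matrix.of fun i j => star (a i) * a j)
    ⟨Matrix.of fun i j => if i = 0 then a j else 0, by
      ext i j
      simp [Matrix.mul_apply, Matrix.conjTranspose_apply, Fin.sum_univ_three]⟩
  have key : ∀ i j : Fin 3, E (star (a i) * a j) = ∑ k : Fin 3, star (P k i) * P k j := by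
    intro i j
    have h := congrFun (congrFun hP i) j
    simpa [Matrix.map_apply, Matrix.mul_apply, Matrix.conjTranspose_apply] using h
  have S00 : ∑ k : Fin 3, star (P k 0) * P k 0 = 1 := by
    have := key 0 0
    simpa [ha, hE.map_one'] using this.symm
  have S01 : ∑ k : Fin 3, star (P k 0) * P k 1 = E c := by
    have := key 0 1
    simpa [ha] using this.symm
  have S10 : ∑ k : Fin 3, star (P k 1) * P k 0 = star (E c) := by
    have := key 1 0
    simpa [ha, hE.map_star'] using this.symm
  have S11 : ∑ k : Fin 3, star (P k 1) * P k 1 = star (E c) * E c := by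
    have := key 1 1
    simpa [ha, hc] using this.symm
  have S02 : ∑ k : Fin 3, star (P k 0) * P k 2 = E b := by
    have := key 0 2
    simpa [ha] using this.symm
  have S12 : ∑ k : Fin 3, star (P k 1) * P k 2 = E (star c * b) := by
    have := key 1 2
    simpa [ha] using this.symm
  -- the defect vector
  set w : Fin 3 → B := fun k => P k 1 - P k 0 * E c with hwdef
  have hsum0 : ∑ k : Fin 3, star (w k) * w k = 0 := by
    have hterm : ∀ k : Fin 3, star (w k) * w k =
        star (P k 1) * P k 1 - (star (P k 1) * P k 0) * E c
          - star (E c) * (star (P k 0) * P k 1)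
          + star (E c) * ((star (P k 0) * P k 0) * E c) := by
      intro k
      simp only [hwdef, star_sub, star_mul]
      noncomm_ring
    rw [Finset.sum_congr rfl fun k _ => hterm k]
    rw [Finset.sum_add_distrib, Finset.sum_sub_distrib, Finset.sum_sub_distrib,
      ← Finset.sum_mul, ← Finset.mul_sum, ← Finset.mul_sum, ← Finset.sum_mul]
    rw [S11, S10, S01, S00]
    noncomm_ring
  have hw0 : ∀ k : Fin 3, w k = 0 := fun k =>
    sum_star_mul_self_eq_zero' Finset.univ w hsum0 k (Finset.mem_univ k)
  have hP1 : ∀ k : Fin 3, P k 1 = P k 0 * E c := by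
    intro k
    have := hw0 k
    rw [hwdef] at this
    exact sub_eq_zero.mp this
  rw [← S12]
  have : ∀ k : Fin 3, star (P k 1) * P k 2 = star (E c) * (star (P k 0) * P k 2) := by
    intro k
    rw [hP1 k, star_mul]
    noncomm_ring
  rw [Finset.sum_congr rfl fun k _ => this k, ← Finset.mul_sum, S02]

end IsCondExp

section Core

variable {B : Type*} [CStarAlgebra B] {A : StarSubalgebra ℂ B} {E : B → B}

lemma blm_conj (u v : B) : IsBoundedLinearMap ℂ (fun b : B => u * b * v) := by
  refine IsLinearMap.with_bound ⟨fun x y => by noncomm_ring, fun c x => by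
    rw [mul_smul_comm, smul_mul_assoc]⟩ (‖u‖ * ‖v‖) fun x => ?_
  calc ‖u * x * v‖ ≤ ‖u * x‖ * ‖v‖ := norm_mul_le _ _
    _ ≤ ‖u‖ * ‖x‖ * ‖v‖ := by
        have := norm_mul_le u x
        exact mul_le_mul_of_nonneg_right this (norm_nonneg v)
    _ = ‖u‖ * ‖v‖ * ‖x‖ := by ring

open Matrix in
lemma IsCondExp.comm_selfadjoint (hA : IsClosed (A : Set B)) (hE : IsCondExp A E)
    (huniq : ∀ F : B → B, IsCondExp A F → F = E) [Nontrivial B] {h : B}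
    (hh : IsSelfAdjoint h) (hcomm : ∀ a ∈ A, h * a = a * h) (b : B) :
    E (h * b) = E h * E b := by
  classical
  set t : ℝ := ‖h‖ + 1 with htdef
  obtain ⟨hdsa, hdd⟩ := exists_star_mul_self_of_selfAdjoint' hh
    (by rw [htdef]; linarith : ‖h‖ ≤ t)
  set d := cfc (fun u : ℝ => Real.sqrt (u + t)) h with hd
  rw [hdsa.star_eq] at hdd
  set p := h + algebraMap ℝ B t with hp
  have hpsa : IsSelfAdjoint p := hh.add (IsSelfAdjoint.algebraMap B (star_trivial _))
  have hpcomm : ∀ a ∈ A, p * a = a * p := by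
    intro a haA
    rw [hp, add_mul, mul_add, hcomm a haA, Algebra.commutes]
  have hdcomm : ∀ a ∈ A, d * a = a * d := by
    intro a haA
    exact (commute_cfc' h a hh (hcomm a haA).symm (hcomm _ (star_mem haA)).symm _).eq
  set q := E p with hq
  have hqA : q ∈ A := hE.mem_of p
  have hq_eq : q = E h + algebraMap ℝ B t := by
    rw [hq, hp, hE.map_add', hE.fixes _ (IsCondExp.algebraMap_real_mem A t)]
  have hqsa : IsSelfAdjoint q := hE.isSelfAdjoint_map hpsa
  have hqcomm : ∀ a ∈ A, q * a = a * q := by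
    intro a haA
    have h1 : E (1 * p * a) = 1 * E p * a := hE.bimodular p 1 (one_mem A) a haA
    have h2 : E (a * p * 1) = a * E p * 1 := hE.bimodular p a haA 1 (one_mem A)
    rw [one_mul, one_mul] at h1
    rw [mul_one, mul_one] at h2
    rw [hq, ← h1, ← h2, hpcomm a haA]
  -- the spectrum of `q` lies in `[1, ∞)`
  have hspec : ∀ u ∈ spectrum ℝ q, 1 ≤ u := by
    obtain ⟨-, hw⟩ := exists_star_mul_self_of_selfAdjoint' hh (le_refl ‖h‖)
    obtain ⟨u0, hu0⟩ := hE.star_mul_self_map _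
    rw [hw] at hu0
    have hq1 : q = algebraMap ℝ B 1 + star u0 * u0 := by
      rw [hq_eq, ← hu0, hE.map_add', hE.fixes _ (IsCondExp.algebraMap_real_mem A ‖h‖)]
      have : algebraMap ℝ B t = algebraMap ℝ B 1 + algebraMap ℝ B ‖h‖ := by
        rw [← map_add]
        congr 1
        rw [htdef]; ring
      rw [this]
      abel
    intro u hu
    rw [hq1, ← spectrum.singleton_add_eq] at hu
    obtain ⟨v, hv, w', hw', hvw⟩ := Set.mem_add.mp hu
    rw [Set.mem_singleton_iff] at hv
    have hnn := spectrum_star_mul_self_nonneg w' hw'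
    rw [← hvw, hv]
    linarith
  -- square root and inverse square root of `q`
  set r := cfc (fun u : ℝ => (Real.sqrt u)⁻¹) q with hr
  set s := cfc (fun u : ℝ => Real.sqrt u) q with hs
  have hsqrt_pos : ∀ u ∈ spectrum ℝ q, 0 < Real.sqrt u := fun u hu =>
    Real.sqrt_pos.mpr (lt_of_lt_of_le one_pos (hspec u hu))
  have hcs : ContinuousOn (fun u : ℝ => Real.sqrt u) (spectrum ℝ q) :=
    Real.continuous_sqrt.continuousOn
  have hcr : ContinuousOn (fun u : ℝ => (Real.sqrt u)⁻¹) (spectrum ℝ q) :=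
    ContinuousOn.inv₀ hcs fun u hu => ne_of_gt (hsqrt_pos u hu)
  have hrsa : IsSelfAdjoint r := cfc_predicate _ q
  have hssa : IsSelfAdjoint s := cfc_predicate _ q
  have hsr : s * r = 1 := by
    rw [hs, hr, ← cfc_mul _ _ q hcs hcr]
    have heq : cfc (fun u : ℝ => Real.sqrt u * (Real.sqrt u)⁻¹) q
        = cfc (fun _ : ℝ => (1 : ℝ)) q :=
      cfc_congr fun u hu => mul_inv_cancel₀ (ne_of_gt (hsqrt_pos u hu))
    rw [heq, cfc_const_one ℝ q]
  have hrs' : r * s = 1 := by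
    rw [hs, hr, ← cfc_mul _ _ q hcr hcs]
    have heq : cfc (fun u : ℝ => (Real.sqrt u)⁻¹ * Real.sqrt u) q
        = cfc (fun _ : ℝ => (1 : ℝ)) q :=
      cfc_congr fun u hu => inv_mul_cancel₀ (ne_of_gt (hsqrt_pos u hu))
    rw [heq, cfc_const_one ℝ q]
  have hss : s * s = q := by
    rw [hs, ← cfc_mul _ _ q hcs hcs]
    have heq : cfc (fun u : ℝ => Real.sqrt u * Real.sqrt u) q = cfc (fun u : ℝ => u) q :=
      cfc_congr fun u hu => Real.mul_self_sqrt (by linarith [hspec u hu])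
    rw [heq, cfc_id' ℝ q]
  have hrA : r ∈ A := StarAlgebra.elemental.le_of_mem hA hqA (cfc_mem_elemental' q hqsa _)
  have hsA : s ∈ A := StarAlgebra.elemental.le_of_mem hA hqA (cfc_mem_elemental' q hqsa _)
  have hrcommA : ∀ a ∈ A, r * a = a * r := by
    intro a haA
    exact (commute_cfc' q a hqsa (hqcomm a haA).symm (hqcomm _ (star_mem haA)).symm _).eq
  have hrq : r * q * r = 1 := by
    rw [← hss]
    calc r * (s * s) * r = (r * s) * (s * r) := by noncomm_ring
      _ = 1 := by rw [hrs', hsr, one_mul]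
  -- the auxiliary conditional expectation
  set F : B → B := fun z => r * E (d * z * d) * r with hF
  have hFcond : IsCondExp A F := by
    constructor
    · exact (blm_conj r r).comp (hE.boundedLinear.comp (blm_conj d d))
    · intro z
      exact mul_mem (mul_mem hrA (hE.mem_of _)) hrA
    · intro a haA
      have h1 : d * a * d = a * p * 1 := by
        rw [hdcomm a haA, mul_assoc, hdd, mul_one]
      have h2 : E (a * p * 1) = a * E p * 1 := hE.bimodular p a haA 1 (one_mem A)
      show r * E (d * a * d) * r = a
      rw [h1, h2, mul_one, ← hq]
      calc r * (a * q) * r = (r * a) * (q * r) := by noncomm_ring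
        _ = (a * r) * (q * r) := by rw [hrcommA a haA]
        _ = a * (r * q * r) := by noncomm_ring
        _ = a := by rw [hrq, mul_one]
    · intro z a haA a' ha'A
      have h1 : d * (a * z * a') * d = a * (d * z * d) * a' := by
        calc d * (a * z * a') * d = (d * a) * (z * (a' * d)) := by noncomm_ring
          _ = (a * d) * (z * (d * a')) := by rw [hdcomm a haA, ← hdcomm a' ha'A]
          _ = a * (d * z * d) * a' := by noncomm_ring
      show r * E (d * (a * z * a') * d) * r = a * (r * E (d * z * d) * r) * a'
      rw [h1, hE.bimodular _ a haA a' ha'A]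
      calc r * (a * E (d * z * d) * a') * r
          = (r * a) * E (d * z * d) * (a' * r) := by noncomm_ring
        _ = (a * r) * E (d * z * d) * (r * a') := by rw [hrcommA a haA, ← hrcommA a' ha'A]
        _ = a * (r * E (d * z * d) * r) * a' := by noncomm_ring
    · intro n M hM
      obtain ⟨N, hMN⟩ := hM
      have hDstar : (Matrix.diagonal (fun _ : Fin n => d))ᴴ = Matrix.diagonal (fun _ : Fin n => d) := by
        have hfun : (star fun _ : Fin n => d) = (fun _ : Fin n => d) := by
          funext i
          simpa using hdsa.star_eq
        rw [Matrix.diagonal_conjTranspose, hfun]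
      have hRstar : (Matrix.diagonal (fun _ : Fin n => r))ᴴ = Matrix.diagonal (fun _ : Fin n => r) := by
        have hfun : (star fun _ : Fin n => r) = (fun _ : Fin n => r) := by
          funext i
          simpa using hrsa.star_eq
        rw [Matrix.diagonal_conjTranspose, hfun]
      obtain ⟨P₀, hP₀⟩ := hE.completelyPositive n
        (Matrix.diagonal (fun _ : Fin n => d) * M * Matrix.diagonal (fun _ : Fin n => d))
        ⟨N * Matrix.diagonal (fun _ : Fin n => d), by
          rw [Matrix.conjTranspose_mul, hDstar, hMN]
          simp only [Matrix.mul_assoc]⟩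
      refine ⟨P₀ * Matrix.diagonal (fun _ : Fin n => r), ?_⟩
      have hstep : (P₀ * Matrix.diagonal (fun _ : Fin n => r))ᴴ * (P₀ * Matrix.diagonal (fun _ : Fin n => r))
          = Matrix.diagonal (fun _ : Fin n => r)
              * ((Matrix.diagonal (fun _ : Fin n => d) * M * Matrix.diagonal (fun _ : Fin n => d)).map E)
              * Matrix.diagonal (fun _ : Fin n => r) := by
        rw [Matrix.conjTranspose_mul, hRstar, hP₀]
        simp only [Matrix.mul_assoc]
      rw [hstep]
      have hDMD : ((Matrix.diagonal fun _ : Fin n => d) * M * Matrix.diagonal fun _ : Fin n => d).map E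
          = Matrix.of fun i j => E (d * M i j * d) := by
        ext i j
        simp [Matrix.mul_diagonal, Matrix.diagonal_mul, Matrix.map_apply, mul_assoc]
      rw [hDMD]
      ext i j
      simp [Matrix.mul_diagonal, Matrix.diagonal_mul, Matrix.map_apply, hF, mul_assoc]
  -- `F` agrees with `E` by uniqueness, giving the key identity
  have hFE := huniq F hFcond
  have hkey : ∀ z : B, E (d * z * d) = s * E z * s := by
    intro z
    have h1 : r * E (d * z * d) * r = E z := congrFun hFE z
    calc E (d * z * d) = (s * r) * E (d * z * d) * (r * s) := by
          rw [hsr, hrs', one_mul, mul_one]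
      _ = s * (r * E (d * z * d) * r) * s := by noncomm_ring
      _ = s * E z * s := by rw [h1]
  have hpp : E (p * p) = q * q := by
    have h1 : p * p = d * p * d := by rw [← hdd]; noncomm_ring
    rw [h1, hkey p, ← hq, ← hss]
    noncomm_ring
  have hyp : E (star p * p) = star (E p) * E p := by
    rw [hpsa.star_eq, ← hq, hqsa.star_eq, hpp]
  have hdom := hE.mul_domain p hyp b
  rw [hpsa.star_eq, ← hq, hqsa.star_eq] at hdom
  have hhb : h * b = p * b - algebraMap ℝ B t * b := by
    rw [hp]
    noncomm_ring
  have halg : E (algebraMap ℝ B t * b) = algebraMap ℝ B t * E b := by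
    rw [IsScalarTower.algebraMap_apply ℝ ℂ B, ← Algebra.smul_def, hE.map_smul', Algebra.smul_def]
  rw [hhb, hE.map_sub', hdom, halg, hq_eq]
  noncomm_ring

end Core

/-- If a unital C*-inclusion `A ⊆ B` admits a unique conditional expectation `E`, then `E`
is multiplicative on the relative commutant `A' ∩ B`. -/
theorem unique_condExp_multiplicative_on_relative_commutant
    {B : Type*} [CStarAlgebra B] (A : StarSubalgebra ℂ B)
    (hA : IsClosed (A : Set B)) (E : B → B) (hE : IsCondExp A E)
    (huniq : ∀ F : B → B, IsCondExp A F → F = E) :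
    ∀ x y : B, (∀ a ∈ A, x * a = a * x) → (∀ a ∈ A, y * a = a * y) →
      E (x * y) = E x * E y := by
  intro x y hx hy
  rcases subsingleton_or_nontrivial B with hB | hB
  · exact Subsingleton.elim _ _
  have hxs : ∀ a ∈ A, star x * a = a * star x := by
    intro a haA
    have hs := hx (star a) (star_mem haA)
    calc star x * a = star (star a * x) := by rw [star_mul, star_star]
      _ = star (x * star a) := by rw [hs]
      _ = a * star x := by rw [star_mul, star_star]
  have hhsa : IsSelfAdjoint (x + star x) := IsSelfAdjoint.add_star_self x
  have hgsa : IsSelfAdjoint (Complex.I • x - Complex.I • star x) := by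
    rw [IsSelfAdjoint, star_sub, star_smul, star_smul, star_star, Complex.star_def,
      Complex.conj_I, neg_smul, neg_smul, sub_neg_eq_add, neg_add_eq_sub]
  have hhcomm : ∀ a ∈ A, (x + star x) * a = a * (x + star x) := by
    intro a haA
    rw [add_mul, mul_add, hx a haA, hxs a haA]
  have hgcomm : ∀ a ∈ A, (Complex.I • x - Complex.I • star x) * a
      = a * (Complex.I • x - Complex.I • star x) := by
    intro a haA
    rw [sub_mul, mul_sub, smul_mul_assoc, smul_mul_assoc, mul_smul_comm, mul_smul_comm,
      hx a haA, hxs a haA]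
  have hEhy : E ((x + star x) * y) = E (x + star x) * E y :=
    hE.comm_selfadjoint hA huniq hhsa hhcomm y
  have hEgy : E ((Complex.I • x - Complex.I • star x) * y)
      = E (Complex.I • x - Complex.I • star x) * E y :=
    hE.comm_selfadjoint hA huniq hgsa hgcomm y
  have hxdecomp : x = (2⁻¹ : ℂ) • (x + star x)
      - (2⁻¹ * Complex.I : ℂ) • (Complex.I • x - Complex.I • star x) := by
    have hI : (Complex.I * Complex.I : ℂ) = -1 := Complex.I_mul_I
    rw [smul_sub, smul_smul, smul_smul, mul_assoc, hI, smul_add]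
    module
  have hxy : x * y = (2⁻¹ : ℂ) • ((x + star x) * y)
      - (2⁻¹ * Complex.I : ℂ) • ((Complex.I • x - Complex.I • star x) * y) := by
    conv_lhs => rw [hxdecomp]
    rw [sub_mul, smul_mul_assoc, smul_mul_assoc]
  have hEx : E x = (2⁻¹ : ℂ) • E (x + star x)
      - (2⁻¹ * Complex.I : ℂ) • E (Complex.I • x - Complex.I • star x) := by
    conv_lhs => rw [hxdecomp]
    rw [hE.map_sub', hE.map_smul', hE.map_smul']
  rw [hxy, hE.map_sub', hE.map_smul', hE.map_smul', hEhy, hEgy, hEx,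
    sub_mul, smul_mul_assoc, smul_mul_assoc]
end

section
/- Let A ⊆ B be a unital C*-inclusion and suppose E : B → A is a conditional expectation which is unique (every conditional expectation F : B → A equals E) and faithful. Then the relative commutant of A in B equals the center of A; in particular, every x ∈ B satisfying x a = a x for all a ∈ A belongs to A. -/
namespace CondExpAux

variable {B : Type*} [CStarAlgebra B]

/-- The set of elements of `A` commuting with every element of `A`, as a star subalgebra. -/
def ZA (A : StarSubalgebra ℂ B) : StarSubalgebra ℂ B where
  carrier := {b : B | b ∈ A ∧ ∀ a ∈ A, b * a = a * b}
  mul_mem' := by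
    rintro b c ⟨hbA, hb⟩ ⟨hcA, hc⟩
    exact ⟨mul_mem hbA hcA, fun a ha => by
      rw [mul_assoc, hc a ha, ← mul_assoc, hb a ha, mul_assoc]⟩
  add_mem' := by
    rintro b c ⟨hbA, hb⟩ ⟨hcA, hc⟩
    exact ⟨add_mem hbA hcA, fun a ha => by rw [add_mul, mul_add, hb a ha, hc a ha]⟩
  one_mem' := ⟨one_mem A, fun a _ => by rw [one_mul, mul_one]⟩
  zero_mem' := ⟨zero_mem A, fun a _ => by rw [zero_mul, mul_zero]⟩
  algebraMap_mem' := fun r => ⟨StarSubalgebra.algebraMap_mem A r, fun a _ => Algebra.commutes r a⟩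
  star_mem' := by
    rintro b ⟨hbA, hb⟩
    refine ⟨star_mem hbA, fun a ha => ?_⟩
    calc star b * a = star (star a * b) := by rw [star_mul, star_star]
      _ = star (b * star a) := by rw [hb (star a) (star_mem ha)]
      _ = a * star b := by rw [star_mul, star_star]

lemma mem_ZA {A : StarSubalgebra ℂ B} {b : B} :
    b ∈ ZA A ↔ b ∈ A ∧ ∀ a ∈ A, b * a = a * b := Iff.rfl

lemma isClosed_ZA {A : StarSubalgebra ℂ B} (hA : IsClosed (A : Set B)) :
    IsClosed (ZA A : Set B) := by
  have : (ZA A : Set B) = (A : Set B) ∩ ⋂ a ∈ (A : Set B), {b : B | b * a = a * b} := by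
    ext b
    simp [mem_ZA, Set.mem_iInter, SetLike.mem_coe]
  rw [this]
  refine hA.inter (isClosed_biInter fun a _ => ?_)
  exact isClosed_eq (continuous_id.mul continuous_const) (continuous_const.mul continuous_id)

lemma cfcC_mem {S : StarSubalgebra ℂ B} (hS : IsClosed (S : Set B)) {a : B} [IsStarNormal a]
    (ha : a ∈ S) (f : ℂ → ℂ) : cfc f a ∈ S := by
  by_cases hf : ContinuousOn f (spectrum ℂ a)
  · rw [cfc_apply f a ‹IsStarNormal a› hf, cfcHom_eq_of_isStarNormal]
    exact StarAlgebra.elemental.le_of_mem hS ha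
      ((continuousFunctionalCalculus a ⟨_, hf.restrict⟩).2)
  · rw [cfc_apply_of_not_continuousOn a hf]; exact zero_mem _

lemma cfcR_mem {S : StarSubalgebra ℂ B} (hS : IsClosed (S : Set B)) {a : B}
    (hsa : IsSelfAdjoint a) (ha : a ∈ S) (f : ℝ → ℝ) : cfc f a ∈ S := by
  have := hsa.isStarNormal
  rw [cfc_real_eq_complex f hsa]
  exact cfcC_mem hS ha _

end CondExpAux


namespace CondExpAux2

open scoped Pointwise

variable {B : Type*} [CStarAlgebra B] [PartialOrder B] [StarOrderedRing B]

lemma sqrt_pair {S : StarSubalgebra ℂ B} (hS : IsClosed (S : Set B)) {e : B}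
    (he : e ∈ S) (h1 : 0 ≤ e - 1) :
    ∃ g h : B, g ∈ S ∧ h ∈ S ∧ IsSelfAdjoint g ∧
      g * h = 1 ∧ h * g = 1 ∧ h * h = e := by
  have hesa : IsSelfAdjoint e := by
    have := (IsSelfAdjoint.of_nonneg h1).add (IsSelfAdjoint.one (R := B))
    simpa using this
  -- spectrum of `e` is contained in `[1, ∞)`
  have hspec : ∀ x ∈ spectrum ℝ e, (1:ℝ) ≤ x := by
    intro x hx
    have hx1 : x - 1 ∈ spectrum ℝ e - ({1} : Set ℝ) := Set.sub_mem_sub hx rfl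
    rw [spectrum.sub_singleton_eq] at hx1
    have := spectrum_nonneg_of_nonneg (by simpa using h1) hx1
    linarith
  have hsqrt_pos : ∀ x ∈ spectrum ℝ e, Real.sqrt x ≠ 0 := fun x hx =>
    ne_of_gt (Real.sqrt_pos.mpr (by linarith [hspec x hx]))
  have hcont1 : ContinuousOn Real.sqrt (spectrum ℝ e) := Real.continuous_sqrt.continuousOn
  have hcont2 : ContinuousOn (fun t : ℝ => (Real.sqrt t)⁻¹) (spectrum ℝ e) :=
    hcont1.inv₀ hsqrt_pos
  refine ⟨cfc (fun t : ℝ => (Real.sqrt t)⁻¹) e, cfc Real.sqrt e, ?_, ?_, ?_, ?_, ?_, ?_⟩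
  · exact CondExpAux.cfcR_mem hS hesa he _
  · exact CondExpAux.cfcR_mem hS hesa he _
  · exact cfc_predicate _ e
  · rw [← cfc_mul _ _ e hcont2 hcont1]
    calc cfc (fun t : ℝ => (Real.sqrt t)⁻¹ * Real.sqrt t) e
        = cfc (fun _ : ℝ => (1:ℝ)) e := by
          apply cfc_congr
          intro x hx
          exact inv_mul_cancel₀ (hsqrt_pos x hx)
      _ = 1 := cfc_const_one ℝ e
  · rw [← cfc_mul _ _ e hcont1 hcont2]
    calc cfc (fun t : ℝ => Real.sqrt t * (Real.sqrt t)⁻¹) e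
        = cfc (fun _ : ℝ => (1:ℝ)) e := by
          apply cfc_congr
          intro x hx
          exact mul_inv_cancel₀ (hsqrt_pos x hx)
      _ = 1 := cfc_const_one ℝ e
  · rw [← cfc_mul _ _ e hcont1 hcont1]
    calc cfc (fun t : ℝ => Real.sqrt t * Real.sqrt t) e
        = cfc (id : ℝ → ℝ) e := by
          apply cfc_congr
          intro x hx
          exact Real.mul_self_sqrt (by linarith [hspec x hx])
      _ = e := cfc_id ℝ e

end CondExpAux2

namespace CondExpAux3

open Matrix

variable {B : Type*} [CStarAlgebra B] [PartialOrder B] [StarOrderedRing B]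
  {A : StarSubalgebra ℂ B} {E : B → B}

lemma pos_of (hE : IsCondExp A E) {b : B} (hb : 0 ≤ b) : 0 ≤ E b := by
  have hs : star (CFC.sqrt b) * CFC.sqrt b = b := by
    rw [(IsSelfAdjoint.of_nonneg (CFC.sqrt_nonneg (a:=b))).star_eq, CFC.sqrt_mul_sqrt_self b hb]
  obtain ⟨P, hP⟩ := hE.completelyPositive 1 (Matrix.of fun _ _ => b)
    ⟨Matrix.of fun _ _ => CFC.sqrt b, by
      ext i j
      simp [Matrix.mul_apply, Matrix.conjTranspose_apply, hs]⟩
  have h00 : E b = star (P 0 0) * P 0 0 := by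
    have := congrArg (fun M : Matrix (Fin 1) (Fin 1) B => M 0 0) hP
    simpa [Matrix.map_apply, Matrix.mul_apply, Matrix.conjTranspose_apply] using this
  rw [h00]
  exact star_mul_self_nonneg _

lemma core (hA : IsClosed (A : Set B)) (hE : IsCondExp A E)
    (huniq : ∀ F : B → B, IsCondExp A F → F = E)
    (hfaithful : ∀ x : B, E (star x * x) = 0 → x = 0)
    {y : B} (hy : IsSelfAdjoint y) (hyc : ∀ a ∈ A, y * a = a * y) (hy1 : 0 ≤ y - 1) :
    y * y ∈ A := by
  have EL := hE.boundedLinear.toIsLinearMap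
  have hEadd : ∀ u v : B, E (u + v) = E u + E v := fun u v => EL.map_add u v
  have hEsub : ∀ u v : B, E (u - v) = E u - E v := fun u v => by
    have := (IsLinearMap.mk' E EL).map_sub u v
    simpa using this
  have hEsmul : ∀ (c : ℂ) (u : B), E (c • u) = c • E u := fun c u => EL.map_smul c u
  have hE1 : E 1 = 1 := hE.fixes 1 (one_mem A)
  set e := E (y * y) with he_def
  have heA : e ∈ A := hE.mem_of _
  -- `y * y - 1` is nonnegative
  have hsa1 : IsSelfAdjoint (y - 1) := hy.sub (IsSelfAdjoint.one (R := B))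
  have hw1 : 0 ≤ y * y - 1 := by
    have h2 : y * y - 1 = star (y - 1) * (y - 1) + ((y - 1) + (y - 1)) := by
      rw [hsa1.star_eq]; noncomm_ring
    rw [h2]
    exact add_nonneg (star_mul_self_nonneg _) (add_nonneg hy1 hy1)
  have he1 : 0 ≤ e - 1 := by
    have h3 : E (y * y - 1) = e - 1 := by rw [hEsub, hE1]
    have := pos_of hE hw1
    rwa [h3] at this
  have hesa : IsSelfAdjoint e := by
    have := (IsSelfAdjoint.of_nonneg he1).add (IsSelfAdjoint.one (R := B))
    simpa using this
  -- `e` commutes with `A`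
  have hyyc : ∀ a ∈ A, y * y * a = a * (y * y) := fun a ha => by
    rw [mul_assoc, hyc a ha, ← mul_assoc, hyc a ha, mul_assoc]
  have hec : ∀ a ∈ A, e * a = a * e := by
    intro a ha
    have h1 : E (a * (y * y) * 1) = a * e * 1 := hE.bimodular (y * y) a ha 1 (one_mem A)
    have h2 : E (1 * (y * y) * a) = 1 * e * a := hE.bimodular (y * y) 1 (one_mem A) a ha
    have h3 : a * (y * y) * 1 = 1 * (y * y) * a := by
      rw [mul_one, one_mul, hyyc a ha]
    rw [h3, h2, one_mul] at h1
    rw [mul_one] at h1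
    exact h1
  have heZ : e ∈ CondExpAux.ZA A := ⟨heA, hec⟩
  obtain ⟨g, h, hgZ, hhZ, hgsa, hgh, hhg, hhh⟩ :=
    CondExpAux2.sqrt_pair (CondExpAux.isClosed_ZA hA) heZ he1
  obtain ⟨hgA, hgc⟩ := hgZ
  obtain ⟨hhA, hhc⟩ := hhZ
  have hgeg : g * e * g = 1 := by
    have h4 : g * e * g = (g * h) * (h * g) := by rw [← hhh]; noncomm_ring
    rw [h4, hgh, hhg, one_mul]
  -- the perturbed conditional expectation
  set F : B → B := fun b => g * E (y * b * y) * g with hF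
  have hFcond : IsCondExp A F := by
    constructor
    · -- bounded linear
      obtain ⟨M, hM0, hM⟩ := hE.boundedLinear.bound
      refine ⟨⟨fun b c => ?_, fun c b => ?_⟩,
        (‖g‖ + 1) * ((‖g‖ + 1) * (M * ((‖y‖ + 1) * (‖y‖ + 1)))), ?_, fun b => ?_⟩
      · simp only [hF]
        rw [show y * (b + c) * y = y * b * y + y * c * y by noncomm_ring, hEadd,
          mul_add, add_mul]
      · simp only [hF]
        rw [show y * (c • b) * y = c • (y * b * y) by
          rw [mul_smul_comm, smul_mul_assoc], hEsmul, mul_smul_comm, smul_mul_assoc]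
      · have h1 : (0:ℝ) < ‖g‖ + 1 := by positivity
        have h2 : (0:ℝ) < ‖y‖ + 1 := by positivity
        exact mul_pos h1 (mul_pos h1 (mul_pos hM0 (mul_pos h2 h2)))
      · simp only [hF]
        calc ‖g * E (y * b * y) * g‖ ≤ ‖g‖ * ‖E (y * b * y)‖ * ‖g‖ := by
              refine (norm_mul_le _ _).trans ?_
              gcongr
              exact norm_mul_le _ _
          _ ≤ ‖g‖ * (M * (‖y‖ * ‖b‖ * ‖y‖)) * ‖g‖ := by
              gcongr
              refine (hM _).trans ?_
              gcongr
              refine (norm_mul_le _ _).trans ?_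
              gcongr
              exact norm_mul_le _ _
          _ = (‖g‖ * (‖g‖ * (M * (‖y‖ * ‖y‖)))) * ‖b‖ := by ring
          _ ≤ ((‖g‖ + 1) * ((‖g‖ + 1) * (M * ((‖y‖ + 1) * (‖y‖ + 1))))) * ‖b‖ := by
              gcongr <;> first
                | exact norm_nonneg _
                | linarith [norm_nonneg g, norm_nonneg y]
                | exact le_of_lt hM0
    · -- mem_of
      intro x
      exact mul_mem (mul_mem hgA (hE.mem_of _)) hgA
    · -- fixes
      intro a ha
      simp only [hF]
      have h5 : y * a * y = a * (y * y) * 1 := by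
        rw [hyc a ha, mul_one, mul_assoc]
      rw [h5, hE.bimodular (y * y) a ha 1 (one_mem A), mul_one]
      calc g * (a * e) * g = (g * a) * e * g := by rw [mul_assoc g a e]
        _ = (a * g) * e * g := by rw [hgc a ha]
        _ = a * (g * e * g) := by noncomm_ring
        _ = a := by rw [hgeg, mul_one]
    · -- bimodular
      intro x a ha b hb
      simp only [hF]
      have key_y : ∀ z : B, y * (a * z) = a * (y * z) := fun z => by
        rw [← mul_assoc, hyc a ha, mul_assoc]
      have key_g : ∀ z : B, g * (a * z) = a * (g * z) := fun z => by
        rw [← mul_assoc, hgc a ha, mul_assoc]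
      have h6 : y * (a * x * b) * y = a * (y * x * y) * b := by
        simp only [mul_assoc]
        rw [key_y, hyc b hb]
      rw [h6, hE.bimodular (y * x * y) a ha b hb]
      simp only [mul_assoc]
      rw [key_g, ← hgc b hb]
    · -- completely positive
      rintro n M ⟨N, rfl⟩
      have hDyH : (Matrix.diagonal (fun _ : Fin n => y))ᴴ = Matrix.diagonal (fun _ => y) := by
        simp [Matrix.diagonal_conjTranspose, hy.star_eq, Pi.star_def]
      have hDgH : (Matrix.diagonal (fun _ : Fin n => g))ᴴ = Matrix.diagonal (fun _ => g) := by
        simp [Matrix.diagonal_conjTranspose, hgsa.star_eq, Pi.star_def]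
      obtain ⟨P, hP⟩ := hE.completelyPositive n
        (Matrix.diagonal (fun _ => y) * (Nᴴ * N) * Matrix.diagonal (fun _ => y))
        ⟨N * Matrix.diagonal (fun _ => y), by
          rw [Matrix.conjTranspose_mul, hDyH]
          noncomm_ring⟩
      refine ⟨P * Matrix.diagonal (fun _ => g), ?_⟩
      have h7 : (P * Matrix.diagonal (fun _ : Fin n => g))ᴴ * (P * Matrix.diagonal (fun _ => g))
          = Matrix.diagonal (fun _ => g) * (Pᴴ * P) * Matrix.diagonal (fun _ => g) := by
        rw [Matrix.conjTranspose_mul, hDgH]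
        noncomm_ring
      rw [h7, ← hP]
      ext i j
      simp only [Matrix.map_apply, Matrix.diagonal_mul, Matrix.mul_diagonal, hF]
  have hFE := huniq F hFcond
  have hFeq : ∀ b : B, g * E (y * b * y) * g = E b := fun b => congrFun hFE b
  -- conclude `E (y⁴) = e * e`
  have hq : E (y * (y * y) * y) = e * e := by
    have h0 := hFeq (y * y)
    calc E (y * (y * y) * y) = (h * g) * E (y * (y * y) * y) * (g * h) := by
          rw [hhg, hgh, one_mul, mul_one]
      _ = h * (g * E (y * (y * y) * y) * g) * h := by noncomm_ring
      _ = h * e * h := by rw [h0]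
      _ = e * (h * h) := by rw [hhc e heA, mul_assoc]
      _ = e * e := by rw [hhh]
  -- faithfulness
  set d := y * y - e with hd
  have hdsa : star d = d := by
    have h1 : star (y * y) = y * y := by rw [StarMul.star_mul, hy.star_eq]
    rw [hd, star_sub, h1, hesa.star_eq]
  have hEyye : E (y * y * e) = e * e := by
    have := hE.bimodular (y * y) 1 (one_mem A) e heA
    rwa [one_mul, one_mul] at this
  have hEeyy : E (e * (y * y)) = e * e := by
    have := hE.bimodular (y * y) e heA 1 (one_mem A)
    rwa [mul_one, mul_one] at this
  have hEee : E (e * e) = e * e := hE.fixes _ (mul_mem heA heA)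
  have hEdd : E (star d * d) = 0 := by
    rw [hdsa]
    have hexp : d * d = ((y * (y * y) * y - y * y * e) - e * (y * y)) + e * e := by
      rw [hd]; noncomm_ring
    rw [hexp, hEadd, hEsub, hEsub, hq, hEyye, hEeyy, hEee]
    abel
  have hd0 : d = 0 := hfaithful d hEdd
  have hfin : y * y = e := by rwa [sub_eq_zero] at hd0
  rw [hfin]
  exact heA

end CondExpAux3


namespace CondExpAux4

variable {B : Type*} [CStarAlgebra B] [PartialOrder B] [StarOrderedRing B]
  {A : StarSubalgebra ℂ B} {E : B → B}

lemma sq_mem (hA : IsClosed (A : Set B)) (hE : IsCondExp A E)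
    (huniq : ∀ F : B → B, IsCondExp A F → F = E)
    (hfaithful : ∀ x : B, E (star x * x) = 0 → x = 0)
    {h : B} (hsa : IsSelfAdjoint h) (hc : ∀ a ∈ A, h * a = a * h) : h * h ∈ A := by
  have hwsa : IsSelfAdjoint (h * h) := by
    rw [IsSelfAdjoint, StarMul.star_mul, hsa.star_eq]
  have hwnn : 0 ≤ h * h := by
    have := star_mul_self_nonneg h
    rwa [hsa.star_eq] at this
  have hwc : ∀ a ∈ A, h * h * a = a * (h * h) := fun a ha => by
    rw [mul_assoc, hc a ha, ← mul_assoc, hc a ha, mul_assoc]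
  -- first auxiliary element : 1 + h*h
  have hy1sa : IsSelfAdjoint (1 + h * h) := (IsSelfAdjoint.one (R := B)).add hwsa
  have hy1c : ∀ a ∈ A, (1 + h * h) * a = a * (1 + h * h) := fun a ha => by
    rw [add_mul, mul_add, one_mul, mul_one, hwc a ha]
  have hy1pos : 0 ≤ (1 + h * h) - 1 := by simpa using hwnn
  have hu : (1 + h * h) * (1 + h * h) ∈ A :=
    CondExpAux3.core hA hE huniq hfaithful hy1sa hy1c hy1pos
  -- second auxiliary element : 1 + (h*h + h*h)
  have hy2sa : IsSelfAdjoint (1 + (h * h + h * h)) :=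
    (IsSelfAdjoint.one (R := B)).add (hwsa.add hwsa)
  have hy2c : ∀ a ∈ A, (1 + (h * h + h * h)) * a = a * (1 + (h * h + h * h)) := fun a ha => by
    rw [add_mul, mul_add, one_mul, mul_one, add_mul, mul_add, hwc a ha]
  have hy2pos : 0 ≤ (1 + (h * h + h * h)) - 1 := by simpa using add_nonneg hwnn hwnn
  have hv : (1 + (h * h + h * h)) * (1 + (h * h + h * h)) ∈ A :=
    CondExpAux3.core hA hE huniq hfaithful hy2sa hy2c hy2pos
  -- extract `h * h`
  set u := (1 + h * h) * (1 + h * h) with hu_def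
  set v := (1 + (h * h + h * h)) * (1 + (h * h + h * h)) with hv_def
  have hsum : u + u + u + u = v + 1 + 1 + 1 + (h * h + (h * h + (h * h + h * h))) := by
    rw [hu_def, hv_def]; noncomm_ring
  have hw4 : h * h + (h * h + (h * h + h * h)) = u + u + u + u - v - 1 - 1 - 1 := by
    rw [hsum]; abel
  have hmem4 : h * h + (h * h + (h * h + h * h)) ∈ A := by
    rw [hw4]
    exact sub_mem (sub_mem (sub_mem (sub_mem
      (add_mem (add_mem (add_mem hu hu) hu) hu) hv) (one_mem A)) (one_mem A)) (one_mem A)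
  have hscal : h * h = (4⁻¹ : ℂ) • (h * h + (h * h + (h * h + h * h))) := by
    rw [smul_add, smul_add, smul_add, ← add_smul, ← add_smul, ← add_smul]
    norm_num
  rw [hscal]
  exact SMulMemClass.smul_mem _ hmem4

lemma selfAdjoint_mem (hA : IsClosed (A : Set B)) (hE : IsCondExp A E)
    (huniq : ∀ F : B → B, IsCondExp A F → F = E)
    (hfaithful : ∀ x : B, E (star x * x) = 0 → x = 0)
    {h : B} (hsa : IsSelfAdjoint h) (hc : ∀ a ∈ A, h * a = a * h) : h ∈ A := by
  have hw : h * h ∈ A := sq_mem hA hE huniq hfaithful hsa hc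
  have h1sa : IsSelfAdjoint (1 + h) := (IsSelfAdjoint.one (R := B)).add hsa
  have h1c : ∀ a ∈ A, (1 + h) * a = a * (1 + h) := fun a ha => by
    rw [add_mul, mul_add, one_mul, mul_one, hc a ha]
  have hw' : (1 + h) * (1 + h) ∈ A := sq_mem hA hE huniq hfaithful h1sa h1c
  have hexp : h + h = (1 + h) * (1 + h) - 1 - h * h := by noncomm_ring
  have hmem2 : h + h ∈ A := by
    rw [hexp]
    exact sub_mem (sub_mem hw' (one_mem A)) hw
  have hscal : h = (2⁻¹ : ℂ) • (h + h) := by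
    rw [smul_add, ← add_smul]
    norm_num
  rw [hscal]
  exact SMulMemClass.smul_mem _ hmem2

end CondExpAux4

/-- If a unital C*-inclusion `A ⊆ B` admits a unique conditional expectation `E` which is
moreover faithful, then the relative commutant `A' ∩ B` equals the center `Z(A)` of `A`;
in particular every `x ∈ B` commuting with `A` belongs to `A`. -/
theorem unique_faithful_condExp_relative_commutant_eq_center
    {B : Type*} [CStarAlgebra B] (A : StarSubalgebra ℂ B)
    (hA : IsClosed (A : Set B)) (E : B → B) (hE : IsCondExp A E)
    (huniq : ∀ F : B → B, IsCondExp A F → F = E)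
    (hfaithful : ∀ x : B, E (star x * x) = 0 → x = 0) :
    {x : B | ∀ a ∈ A, x * a = a * x} = {x : B | x ∈ A ∧ ∀ b ∈ A, x * b = b * x} := by
  letI : PartialOrder B := CStarAlgebra.spectralOrder B
  haveI : StarOrderedRing B := CStarAlgebra.spectralOrderedRing B
  ext x
  simp only [Set.mem_setOf_eq]
  refine ⟨fun hx => ⟨?_, hx⟩, fun hx => hx.2⟩
  -- `star x` also commutes with `A`
  have hxs : ∀ a ∈ A, star x * a = a * star x := by
    intro a ha
    calc star x * a = star (star a * x) := by rw [StarMul.star_mul, star_star]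
      _ = star (x * star a) := by rw [hx (star a) (star_mem ha)]
      _ = a * star x := by rw [StarMul.star_mul, star_star]
  -- real and imaginary parts
  set hre : B := (2⁻¹ : ℂ) • (x + star x) with hre_def
  set him : B := (2⁻¹ : ℂ) • (Complex.I • (star x - x)) with him_def
  have hre_sa : IsSelfAdjoint hre := by
    rw [IsSelfAdjoint, hre_def, star_smul, star_add, star_star]
    simp [add_comm]
  have him_sa : IsSelfAdjoint him := by
    rw [IsSelfAdjoint, him_def, star_smul, star_smul, star_sub, star_star]
    simp only [smul_smul]
    have h9 : star (2⁻¹ : ℂ) * star Complex.I = -(2⁻¹ * Complex.I) := by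
      simp [Complex.star_def, Complex.conj_I]
    rw [h9, neg_smul, ← smul_neg, neg_sub]
  have hre_c : ∀ a ∈ A, hre * a = a * hre := fun a ha => by
    rw [hre_def, smul_mul_assoc, mul_smul_comm, add_mul, mul_add, hx a ha, hxs a ha]
  have him_c : ∀ a ∈ A, him * a = a * him := fun a ha => by
    rw [him_def, smul_mul_assoc, mul_smul_comm, smul_mul_assoc, mul_smul_comm,
      sub_mul, mul_sub, hx a ha, hxs a ha]
  have hre_mem : hre ∈ A := CondExpAux4.selfAdjoint_mem hA hE huniq hfaithful hre_sa hre_c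
  have him_mem : him ∈ A := CondExpAux4.selfAdjoint_mem hA hE huniq hfaithful him_sa him_c
  have hdecomp : x = hre + Complex.I • him := by
    have h10 : Complex.I • him = (2⁻¹ : ℂ) • (x - star x) := by
      rw [him_def, smul_smul, smul_smul]
      rw [show Complex.I * 2⁻¹ * Complex.I = -(2⁻¹ : ℂ) by
        rw [mul_comm Complex.I (2⁻¹ : ℂ), mul_assoc, Complex.I_mul_I]; ring]
      rw [neg_smul, ← smul_neg, neg_sub]
    rw [h10, hre_def, ← smul_add]
    rw [show (x + star x) + (x - star x) = x + x by abel]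
    rw [← two_smul ℂ x, smul_smul]
    norm_num
  rw [hdecomp]
  exact add_mem hre_mem (SMulMemClass.smul_mem _ him_mem)
end

section
/- Let A ⊆ B be a unital C*-inclusion, E : B → A a conditional expectation, and x ∈ B a self-adjoint element with ‖x‖ < 1 that commutes with every element of A. Then 1 − x is a positive invertible element of B, 1 − E(x) is a positive invertible element of A lying in the center of A, and the map θ : B → A defined by θ(t) = E((1 − x)^{1/2} t (1 − x)^{1/2}) · (1 − E(x))^{−1} (where (1 − x)^{1/2} is the positive square root given by the continuous functional calculus) is again a conditional expectation for A ⊆ B. -/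
open Matrix


open Polynomial in
private lemma commute_aeval {B : Type*} [CStarAlgebra B] {v a : B} (h : Commute v a)
    (p : ℝ[X]) : Commute v (aeval a p) := by
  induction p using Polynomial.induction_on' with
  | add p q hp hq => simpa [map_add] using hp.add_right hq
  | monomial n r =>
    have hc : Commute v (algebraMap ℝ B r) :=
      (show Commute ((algebraMap ℝ B) r) v from Algebra.commutes r v).symm
    simpa [Polynomial.aeval_monomial] using hc.mul_right (h.pow_right n)

private lemma commute_cfc_real {B : Type*} [CStarAlgebra B] {v a : B}
    (ha : IsSelfAdjoint a) (h : Commute v a) (f : ℝ → ℝ) :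
    Commute v (cfc f a) := by
  by_cases hf : ContinuousOn f (spectrum ℝ a)
  · have main : ∀ g : C(spectrum ℝ a, ℝ), Commute v (cfcHom ha g) := by
      have hclosed : IsClosed {g : C(spectrum ℝ a, ℝ) | Commute v (cfcHom ha g)} := by
        have hc : Continuous (fun g : C(spectrum ℝ a, ℝ) => cfcHom ha g) :=
          cfcHom_continuous ha
        exact isClosed_eq (continuous_const.mul hc) (hc.mul continuous_const)
      have hpoly : (polynomialFunctions (spectrum ℝ a) : Set C(spectrum ℝ a, ℝ)) ⊆
          {g | Commute v (cfcHom ha g)} := by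
        rintro g hg
        rw [SetLike.mem_coe, polynomialFunctions, Subalgebra.mem_map] at hg
        obtain ⟨p, -, rfl⟩ := hg
        have h1 : (Polynomial.toContinuousMapOnAlgHom (spectrum ℝ a)) p =
            Polynomial.aeval
              ((Polynomial.toContinuousMapOnAlgHom (spectrum ℝ a)) Polynomial.X) p := by
          rw [Polynomial.aeval_algHom_apply, Polynomial.aeval_X_left_apply]
        have h2 : (Polynomial.toContinuousMapOnAlgHom (spectrum ℝ a)) Polynomial.X =
            (ContinuousMap.id ℝ).restrict (spectrum ℝ a) := by
          ext z; simp
        simp only [Set.mem_setOf_eq, h1, h2]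
        rw [← Polynomial.aeval_algHom_apply (cfcHom ha), cfcHom_id ha]
        exact commute_aeval h p
      intro g
      have htop := polynomialFunctions.topologicalClosure (spectrum ℝ a)
      have hg : g ∈ (polynomialFunctions (spectrum ℝ a)).topologicalClosure := by
        rw [htop]; trivial
      exact closure_minimal hpoly hclosed hg
    rw [cfc_apply f a ha hf]
    exact main _
  · rw [cfc_apply_of_not_continuousOn a hf]
    exact Commute.zero_right v

private lemma commute_sqrt {B : Type*} [CStarAlgebra B] [PartialOrder B] [StarOrderedRing B]
    {v a : B} (ha : 0 ≤ a) (h : Commute v a) : Commute v (CFC.sqrt a) := by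
  rw [CFC.sqrt_eq_cfc, cfc_nnreal_eq_real _ _ ha]
  exact commute_cfc_real (.of_nonneg ha) h _

private lemma IsCondExp.nonneg_of {B : Type*} [CStarAlgebra B] [PartialOrder B]
    [StarOrderedRing B] {A : StarSubalgebra ℂ B} {E : B → B} (hE : IsCondExp A E)
    {y : B} (hy : 0 ≤ y) : 0 ≤ E y := by
  have hsq : CFC.sqrt y * CFC.sqrt y = y := CFC.sqrt_mul_sqrt_self y hy
  have hstar : star (CFC.sqrt y) = CFC.sqrt y :=
    (IsSelfAdjoint.of_nonneg (CFC.sqrt_nonneg _)).star_eq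
  have hmat : (Matrix.of fun _ _ : Fin 1 => y) =
      (Matrix.of fun _ _ : Fin 1 => CFC.sqrt y)ᴴ *
        (Matrix.of fun _ _ : Fin 1 => CFC.sqrt y) := by
    ext i j
    simp [Matrix.mul_apply, Matrix.conjTranspose_apply, Fin.sum_univ_one, hstar, hsq]
  obtain ⟨P, hP⟩ := hE.completelyPositive 1 _ ⟨_, hmat⟩
  have h00 := congrFun (congrFun hP 0) 0
  simp only [Matrix.map_apply, Matrix.mul_apply, Matrix.conjTranspose_apply,
    Fin.sum_univ_one, Matrix.of_apply] at h00
  rw [h00]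
  exact star_mul_self_nonneg _

/-- Given a conditional expectation `E` for a unital C*-inclusion `A ⊆ B` and a self-adjoint
`x ∈ B` with `‖x‖ < 1` commuting with every element of `A`: `1 - x` is positive and invertible
in `B`, `1 - E x` is positive and invertible and lies in the center of `A`, and
`θ : t ↦ E (√(1-x) * t * √(1-x)) * (1 - E x)⁻¹` is again a conditional expectation. -/
theorem condExp_perturbation_is_condExp
    {B : Type*} [CStarAlgebra B] [PartialOrder B] [StarOrderedRing B]
    (A : StarSubalgebra ℂ B) (hA : IsClosed (A : Set B))
    (E : B → B) (hE : IsCondExp A E)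
    (x : B) (hx_sa : IsSelfAdjoint x) (hx_norm : ‖x‖ < 1)
    (hx_comm : ∀ a ∈ A, x * a = a * x) :
    (0 ≤ 1 - x ∧ IsUnit (1 - x)) ∧
    (0 ≤ 1 - E x ∧ IsUnit (1 - E x) ∧ (1 - E x) ∈ A ∧
      ∀ b ∈ A, (1 - E x) * b = b * (1 - E x)) ∧
    IsCondExp A (fun t : B =>
      E (CFC.sqrt (1 - x) * t * CFC.sqrt (1 - x)) * Ring.inverse (1 - E x)) := by
  have lE := hE.boundedLinear.toIsLinearMap
  have h1A : (1 : B) ∈ A := one_mem A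
  have hE1 : E 1 = 1 := hE.fixes 1 h1A
  have hxle : x ≤ ‖x‖ • (1 : B) := by
    simpa [Algebra.algebraMap_eq_smul_one] using hx_sa.le_algebraMap_norm_self
  set ε : ℝ := 1 - ‖x‖ with hε
  have hεpos : 0 < ε := by simp only [hε]; linarith
  have hkey : ε • (1 : B) ≤ 1 - x := by
    have h := sub_le_sub_left hxle (1 : B)
    calc ε • (1 : B) = 1 - ‖x‖ • 1 := by rw [hε, sub_smul, one_smul]
      _ ≤ 1 - x := h
  have hε1_nonneg : (0 : B) ≤ ε • 1 := by
    have h : ε • (1 : B) = star (Real.sqrt ε • (1 : B)) * (Real.sqrt ε • 1) := by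
      rw [star_smul, star_one, star_trivial, smul_mul_smul_comm, mul_one,
        Real.mul_self_sqrt hεpos.le]
    rw [h]
    exact star_mul_self_nonneg _
  have h1x_nonneg : (0 : B) ≤ 1 - x := hε1_nonneg.trans hkey
  have h1x_unit : IsUnit (1 - x) := isUnit_one_sub_of_norm_lt_one hx_norm
  have Emono : ∀ y z : B, y ≤ z → E y ≤ E z := fun y z h => by
    have h0 := hE.nonneg_of (sub_nonneg.mpr h)
    rw [lE.map_sub] at h0
    exact sub_nonneg.mp h0
  have hEε : E (ε • (1 : B)) = ε • 1 := by
    rw [← Complex.coe_smul, lE.map_smul, hE1, Complex.coe_smul]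
  have hExkey : ε • (1 : B) ≤ 1 - E x := by
    have h := Emono _ _ hkey
    rwa [hEε, lE.map_sub, hE1] at h
  have hEx_nonneg : (0 : B) ≤ 1 - E x := hε1_nonneg.trans hExkey
  have hε1_unit : IsUnit (ε • (1 : B)) := by
    refine ⟨⟨ε • 1, ε⁻¹ • 1, ?_, ?_⟩, rfl⟩
    · rw [smul_mul_smul_comm, mul_one, mul_inv_cancel₀ hεpos.ne', one_smul]
    · rw [smul_mul_smul_comm, mul_one, inv_mul_cancel₀ hεpos.ne', one_smul]
  have hEx_unit : IsUnit (1 - E x) := CStarAlgebra.isUnit_of_le _ hExkey (hε1_unit.isStrictlyPositive hε1_nonneg)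
  have hEx_mem : (1 : B) - E x ∈ A := sub_mem h1A (hE.mem_of x)
  have hcommEx : ∀ b ∈ A, E x * b = b * E x := fun b hb => by
    have h1 : E (x * b) = E x * b := by simpa using hE.bimodular x 1 h1A b hb
    have h2 : E (b * x) = b * E x := by simpa using hE.bimodular x b hb 1 h1A
    rw [← h1, ← h2, hx_comm b hb]
  have hd_comm : ∀ b ∈ A, (1 - E x) * b = b * (1 - E x) := fun b hb => by
    simp [sub_mul, mul_sub, hcommEx b hb]
  refine ⟨⟨h1x_nonneg, h1x_unit⟩, ⟨hEx_nonneg, hEx_unit, hEx_mem, hd_comm⟩, ?_⟩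
  set s := CFC.sqrt (1 - x) with hs
  set d := 1 - E x with hdd
  set c := Ring.inverse d with hcc
  have hs_sa : IsSelfAdjoint s := .of_nonneg (CFC.sqrt_nonneg _)
  have hss : s * s = 1 - x := CFC.sqrt_mul_sqrt_self _ h1x_nonneg
  have hs_comm : ∀ a ∈ A, s * a = a * s := fun a ha => by
    have hca : Commute a (1 - x) := by
      show a * (1 - x) = (1 - x) * a
      simp [mul_sub, sub_mul, hx_comm a ha]
    exact ((commute_sqrt h1x_nonneg hca).symm : Commute s a)
  have hdc : d * c = 1 := Ring.mul_inverse_cancel _ hEx_unit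
  have hcd : c * d = 1 := Ring.inverse_mul_cancel _ hEx_unit
  have hc_comm : ∀ b ∈ A, c * b = b * c := fun b hb => by
    have h := hd_comm b hb
    calc c * b = c * b * (d * c) := by rw [hdc, mul_one]
      _ = c * (b * d) * c := by rw [← mul_assoc, mul_assoc c b d]
      _ = c * (d * b) * c := by rw [← h]
      _ = (c * d) * (b * c) := by rw [← mul_assoc c d b, mul_assoc (c * d) b c]
      _ = b * c := by rw [hcd, one_mul]
  have hd_sa : IsSelfAdjoint d := .of_nonneg hEx_nonneg
  have hc_star : star c = c := by
    have h1 : d * star c = 1 := by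
      have h := congrArg star hcd
      simpa [StarMul.star_mul, hd_sa.star_eq] using h
    calc star c = (c * d) * star c := by rw [hcd, one_mul]
      _ = c * (d * star c) := mul_assoc _ _ _
      _ = c := by rw [h1, mul_one]
  have hc_nonneg : (0 : B) ≤ c := by
    have hsd_sa : star (CFC.sqrt d) = CFC.sqrt d :=
      (IsSelfAdjoint.of_nonneg (CFC.sqrt_nonneg _)).star_eq
    have hsd : CFC.sqrt d * CFC.sqrt d = d := CFC.sqrt_mul_sqrt_self _ hEx_nonneg
    have h : star (CFC.sqrt d * c) * (CFC.sqrt d * c) = c := by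
      rw [StarMul.star_mul, hsd_sa, hc_star, mul_assoc c (CFC.sqrt d) (CFC.sqrt d * c),
        ← mul_assoc (CFC.sqrt d) (CFC.sqrt d) c, hsd, hdc, mul_one]
    rw [← h]
    exact star_mul_self_nonneg _
  have hc_mem : c ∈ A := by
    haveI : IsClosed (A : Set B) := hA
    have hdu : IsUnit (⟨d, hEx_mem⟩ : A) := A.coe_isUnit.mp hEx_unit
    obtain ⟨u, hu⟩ := hdu
    have hvu : d * (((u⁻¹ : Aˣ) : A) : B) = 1 := by
      have h : (⟨d, hEx_mem⟩ : A) * ((u⁻¹ : Aˣ) : A) = 1 := by rw [← hu]; exact_mod_cast u.mul_inv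
      simpa using congrArg (Subtype.val) h
    have hcu : c = (((u⁻¹ : Aˣ) : A) : B) := by
      calc c = c * (d * (((u⁻¹ : Aˣ) : A) : B)) := by rw [hvu, mul_one]
        _ = (c * d) * (((u⁻¹ : Aˣ) : A) : B) := (mul_assoc _ _ _).symm
        _ = (((u⁻¹ : Aˣ) : A) : B) := by rw [hcd, one_mul]
    rw [hcu]
    exact SetLike.coe_mem _
  refine ⟨⟨⟨fun t u => ?_, fun k t => ?_⟩, ?_⟩, fun t => mul_mem (hE.mem_of _) hc_mem,
    fun a ha => ?_, fun t a ha b hb => ?_, fun n M hM => ?_⟩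
  · show E (s * (t + u) * s) * c = E (s * t * s) * c + E (s * u * s) * c
    rw [mul_add, add_mul, lE.map_add, add_mul]
  · show E (s * (k • t) * s) * c = k • (E (s * t * s) * c)
    rw [mul_smul_comm, smul_mul_assoc, lE.map_smul, smul_mul_assoc]
  · obtain ⟨M, hM, hbd⟩ := hE.boundedLinear.bound
    refine ⟨M * ‖s‖ * ‖s‖ * ‖c‖ + 1, by positivity, fun t => ?_⟩
    have h1 : ‖E (s * t * s) * c‖ ≤ ‖E (s * t * s)‖ * ‖c‖ := norm_mul_le _ _
    have h2 : ‖E (s * t * s)‖ ≤ M * ‖s * t * s‖ := hbd _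
    have h3 : ‖s * t * s‖ ≤ ‖s‖ * ‖t‖ * ‖s‖ :=
      (norm_mul_le _ _).trans (mul_le_mul_of_nonneg_right (norm_mul_le s t) (norm_nonneg s))
    have h4 : M * ‖s * t * s‖ ≤ M * (‖s‖ * ‖t‖ * ‖s‖) :=
      mul_le_mul_of_nonneg_left h3 hM.le
    calc ‖E (s * t * s) * c‖ ≤ ‖E (s * t * s)‖ * ‖c‖ := h1
      _ ≤ (M * (‖s‖ * ‖t‖ * ‖s‖)) * ‖c‖ := by
          exact mul_le_mul_of_nonneg_right (h2.trans h4) (norm_nonneg c)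
      _ ≤ (M * ‖s‖ * ‖s‖ * ‖c‖ + 1) * ‖t‖ := by
          nlinarith [norm_nonneg t, norm_nonneg c, norm_nonneg s, hM.le]
  · show E (s * a * s) * c = a
    have h1 : s * a * s = a * (s * s) := by rw [hs_comm a ha, mul_assoc]
    have hax : E (a * x) = a * E x := by simpa using hE.bimodular x a ha 1 h1A
    have h2 : E (a * (1 - x)) = a * d := by
      rw [mul_sub, mul_one, lE.map_sub, hE.fixes a ha, hax, hdd, mul_sub, mul_one]
    calc E (s * a * s) * c = E (a * (1 - x)) * c := by rw [h1, hss]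
      _ = a * d * c := by rw [h2]
      _ = a := by rw [mul_assoc, hdc, mul_one]
  · show E (s * (a * t * b) * s) * c = a * (E (s * t * s) * c) * b
    have h1 : s * (a * t * b) * s = a * (s * t * s) * b := by
      simp only [← mul_assoc]
      rw [hs_comm a ha, mul_assoc (a * s * t) b s, ← hs_comm b hb, ← mul_assoc]
    rw [h1, hE.bimodular _ a ha b hb]
    have hbc := hc_comm b hb
    calc a * E (s * t * s) * b * c = a * E (s * t * s) * (b * c) := by rw [mul_assoc]
      _ = a * E (s * t * s) * (c * b) := by rw [hbc]
      _ = a * (E (s * t * s) * c) * b := by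
          rw [mul_assoc a (E (s * t * s)) (c * b), ← mul_assoc (E (s * t * s)) c b,
            ← mul_assoc a (E (s * t * s) * c) b]
  · obtain ⟨N, hN⟩ := hM
    set S : Matrix (Fin n) (Fin n) B := Matrix.diagonal (fun _ => s) with hS
    have hSH : Sᴴ = S := by
      have hst : (star fun _ : Fin n => s) = (fun _ : Fin n => s) :=
        funext fun _ => hs_sa.star_eq
      rw [hS, Matrix.diagonal_conjTranspose, hst]
    have hmat : S * M * S = (N * S)ᴴ * (N * S) := by
      rw [Matrix.conjTranspose_mul, hSH, hN]
      simp only [Matrix.mul_assoc]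
    obtain ⟨Q, hQ⟩ := hE.completelyPositive n (S * M * S) ⟨N * S, hmat⟩
    set r := CFC.sqrt c with hr
    have hr_sa : IsSelfAdjoint r := .of_nonneg (CFC.sqrt_nonneg _)
    have hrr : r * r = c := CFC.sqrt_mul_sqrt_self _ hc_nonneg
    set R : Matrix (Fin n) (Fin n) B := Matrix.diagonal (fun _ => r) with hR
    have hRH : Rᴴ = R := by
      have hst : (star fun _ : Fin n => r) = (fun _ : Fin n => r) :=
        funext fun _ => hr_sa.star_eq
      rw [hR, Matrix.diagonal_conjTranspose, hst]
    refine ⟨Q * R, ?_⟩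
    have key : (M.map fun t => E (s * t * s) * c) = R * ((S * M * S).map E) * R := by
      ext i j
      have hentry : (S * M * S) i j = s * M i j * s := by
        simp [hS, Matrix.diagonal_mul, Matrix.mul_diagonal]
      have hRentry : (R * ((S * M * S).map E) * R) i j = r * E ((S * M * S) i j) * r := by
        simp [hR, Matrix.diagonal_mul, Matrix.mul_diagonal, Matrix.map_apply]
      rw [Matrix.map_apply, hRentry, hentry]
      have hy : E (s * M i j * s) ∈ A := hE.mem_of _
      have hyc : Commute (E (s * M i j * s)) c :=
        ((show Commute c (E (s * M i j * s)) from hc_comm _ hy).symm)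
      have hyr : Commute (E (s * M i j * s)) r := commute_sqrt hc_nonneg hyc
      calc E (s * M i j * s) * c = E (s * M i j * s) * (r * r) := by rw [hrr]
        _ = (E (s * M i j * s) * r) * r := (mul_assoc _ _ _).symm
        _ = (r * E (s * M i j * s)) * r := by rw [hyr.eq]
        _ = r * E (s * M i j * s) * r := rfl
    rw [key, Matrix.conjTranspose_mul, hRH, hQ]
    simp only [Matrix.mul_assoc]
end

section
/- Let A ⊆ B be a unital C*-inclusion and suppose E : B → A is a conditional expectation which is unique, i.e., every conditional expectation F : B → A equals E. Then for every self-adjoint x ∈ B commuting with every element of A, one has E(x²) = E(x)². -/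
section Aux

variable {B : Type*} [CStarAlgebra B]

open StarAlgebra in
/-- An inverse square root `w` of an element `d` close to `1`, lying in every closed
star-subalgebra containing `d`. -/
lemma my_exists_w {d : B} (hd : IsSelfAdjoint d) (hnorm : ‖d - 1‖ < 1) :
    ∃ w : B, star w * w * d = 1 ∧
      ∀ (S : StarSubalgebra ℂ B), IsClosed (S : Set B) → d ∈ S → w ∈ S := by
  rcases subsingleton_or_nontrivial B with hB | hB
  · exact ⟨0, Subsingleton.elim _ _, fun S _ _ => zero_mem S⟩
  have hdn : IsStarNormal d := hd.isStarNormal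
  have h0 : 0 < 1 - ‖d - 1‖ := by linarith
  have hb : ∀ z ∈ spectrum ℂ d, 1 - ‖d - 1‖ ≤ z.re ∧ z = (z.re : ℂ) := by
    intro z hz
    have hre := hd.mem_spectrum_eq_re hz
    have hz' : z ∈ spectrum ℂ ((algebraMap ℂ B) 1 + (d - 1)) := by simpa using hz
    rw [← spectrum.singleton_add_eq] at hz'
    obtain ⟨a, ha, b, hb, hab⟩ := Set.mem_add.mp hz'
    rw [Set.mem_singleton_iff] at ha
    subst ha
    have hble : ‖b‖ ≤ ‖d - 1‖ := spectrum.norm_le_norm_of_mem hb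
    have h2 : -‖b‖ ≤ b.re := by
      have := (abs_le.mp (Complex.abs_re_le_norm b)).1
      simpa using this
    refine ⟨?_, hre⟩
    have : z.re = 1 + b.re := by rw [← hab]; simp
    linarith
  have hpos : ∀ z ∈ spectrum ℂ d, 0 < z.re := fun z hz => lt_of_lt_of_le h0 (hb z hz).1
  set f : ℂ → ℂ := fun z => ((Real.sqrt z.re)⁻¹ : ℝ) with hf
  have hsne : ∀ z ∈ spectrum ℂ d, Real.sqrt z.re ≠ 0 :=
    fun z hz => ne_of_gt (Real.sqrt_pos.mpr (hpos z hz))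
  have hfc : ContinuousOn f (spectrum ℂ d) := by
    apply Complex.continuous_ofReal.comp_continuousOn
    exact ((Real.continuous_sqrt.comp Complex.continuous_re).continuousOn).inv₀ hsne
  have hfc' : ContinuousOn (fun z => star (f z)) (spectrum ℂ d) :=
    continuous_star.comp_continuousOn hfc
  refine ⟨cfc f d, ?_, ?_⟩
  · have h1 : cfc (fun z => star (f z) * f z * z) d = star (cfc f d) * cfc f d * d := by
      rw [cfc_mul (fun z => star (f z) * f z) (fun z => z) d (hfc'.mul hfc) (by fun_prop), cfc_mul _ _ d hfc' hfc,
        cfc_star f d, cfc_id' ℂ d]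
    rw [← h1]
    have h2 : (spectrum ℂ d).EqOn (fun z => star (f z) * f z * z) (fun _ => (1 : ℂ)) := by
      intro z hz
      obtain ⟨hle, hze⟩ := hb z hz
      have hzr : 0 < z.re := hpos z hz
      simp only [hf]
      rw [Complex.star_def, Complex.conj_ofReal]
      conv_lhs => rw [hze]
      norm_cast
      rw [← mul_inv, Real.mul_self_sqrt hzr.le, inv_mul_cancel₀ hzr.ne']
    rw [cfc_congr h2, cfc_const_one ℂ d]
  · intro S hS hdS
    refine cfc_cases (· ∈ S) d f (zero_mem S) ?_
    intro hf' hdn'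
    rw [cfcHom_eq_of_isStarNormal]
    exact elemental.le_of_mem hS hdS (SetLike.coe_mem _)

lemma my_isClosed_centralizer (s : Set B) : IsClosed (Set.centralizer s) := by
  have h : Set.centralizer s = ⋂ m ∈ s, {c : B | m * c = c * m} := by
    ext c; simp [Set.mem_centralizer_iff]
  rw [h]
  exact isClosed_biInter fun m _ =>
    isClosed_eq (continuous_const.mul continuous_id) (continuous_id.mul continuous_const)

variable {A : StarSubalgebra ℂ B} {E : B → B}

lemma my_star_mul_self (hE : IsCondExp A E) (y : B) :
    ∃ p : B, E (star y * y) = star p * p := by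
  obtain ⟨P, hP⟩ := hE.completelyPositive 1 (Matrix.of fun _ _ => star y * y)
    ⟨Matrix.of fun _ _ => y, by
      ext i j
      simp [Matrix.mul_apply, Matrix.conjTranspose_apply]⟩
  refine ⟨P 0 0, ?_⟩
  have h := Matrix.ext_iff.mpr hP 0 0
  simpa [Matrix.map_apply, Matrix.mul_apply, Matrix.conjTranspose_apply] using h

lemma my_selfAdjoint (hE : IsCondExp A E) {y : B} (hy : IsSelfAdjoint y) :
    IsSelfAdjoint (E y) := by
  have hlin := hE.boundedLinear.toIsLinearMap
  have E1 : E 1 = 1 := hE.fixes 1 (one_mem A)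
  have h1 : IsSelfAdjoint (E ((1 + y) * (1 + y))) := by
    obtain ⟨p, hp⟩ := my_star_mul_self hE (1 + y)
    have : star (1 + y) = 1 + y := by simp [hy.star_eq]
    rw [show (1 + y) * (1 + y) = star (1 + y) * (1 + y) by rw [this], hp]
    simpa [IsSelfAdjoint, star_mul] using rfl
  have h2 : IsSelfAdjoint (E (y * y)) := by
    obtain ⟨p, hp⟩ := my_star_mul_self hE y
    rw [show y * y = star y * y by rw [hy.star_eq], hp]
    simpa [IsSelfAdjoint, star_mul] using rfl
  have hexp : (1 + y) * (1 + y) = 1 + (y + y + y * y) := by noncomm_ring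
  have hEexp : E ((1 + y) * (1 + y)) = 1 + (E y + E y + E (y * y)) := by
    rw [hexp, hlin.map_add, hlin.map_add, hlin.map_add, E1]
  have key : E y + E y = E ((1 + y) * (1 + y)) - 1 - E (y * y) := by
    rw [hEexp]; abel
  have hstar : star (E y) + star (E y) = E y + E y := by
    have := congrArg star key
    rw [star_sub, star_sub, star_add, h1.star_eq, h2.star_eq, star_one] at this
    rw [this, key]
  have h2smul : (2 : ℂ) • star (E y) = (2 : ℂ) • E y := by
    rw [two_smul, two_smul, hstar]
  exact smul_right_injective B (two_ne_zero) h2smul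

open Matrix in
lemma my_key (hA : IsClosed (A : Set B)) (hE : IsCondExp A E)
    (huniq : ∀ F : B → B, IsCondExp A F → F = E)
    (x : B) (hx : IsSelfAdjoint x) (hxc : ∀ a ∈ A, x * a = a * x)
    (s : ℝ) (hsmall : 2 * |s| * ‖E x‖ + |s| ^ 2 * ‖E (x * x)‖ < 1) :
    E x + ((2 * s : ℝ) : ℂ) • E (x * x) + ((s ^ 2 : ℝ) : ℂ) • E (x * (x * x))
      = E x + ((2 * s : ℝ) : ℂ) • (E x * E x)
        + ((s ^ 2 : ℝ) : ℂ) • (E x * E (x * x)) := by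
  have hlin := hE.boundedLinear.toIsLinearMap
  have E1 : E 1 = 1 := hE.fixes 1 (one_mem A)
  have hEl : ∀ a ∈ A, ∀ b, E (a * b) = a * E b := by
    intro a ha b
    have := hE.bimodular b a ha 1 (one_mem A)
    simpa using this
  have hEr : ∀ b, ∀ a ∈ A, E (b * a) = E b * a := by
    intro b a ha
    have := hE.bimodular b 1 (one_mem A) a ha
    simpa using this
  have hcommE : ∀ y : B, (∀ a ∈ A, y * a = a * y) → ∀ a ∈ A, E y * a = a * E y := by
    intro y hy a ha
    rw [← hEr y a ha, hy a ha, hEl a ha y]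
  have hx2c : ∀ a ∈ A, (x * x) * a = a * (x * x) := by
    intro a ha
    rw [mul_assoc, hxc a ha, ← mul_assoc, hxc a ha, mul_assoc]
  set α : ℂ := ((2 * s : ℝ) : ℂ) with hα
  set β : ℂ := ((s ^ 2 : ℝ) : ℂ) with hβ
  set e1 : B := E x with he1
  set e2 : B := E (x * x) with he2
  have he1A : e1 ∈ A := hE.mem_of x
  have he2A : e2 ∈ A := hE.mem_of (x * x)
  have he1c : ∀ a ∈ A, e1 * a = a * e1 := hcommE x hxc
  have he2c : ∀ a ∈ A, e2 * a = a * e2 := hcommE (x * x) hx2c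
  have he1sa : IsSelfAdjoint e1 := my_selfAdjoint hE hx
  have he2sa : IsSelfAdjoint e2 := my_selfAdjoint hE (by
    rw [isSelfAdjoint_iff, StarMul.star_mul, hx.star_eq])
  -- the element c and its square
  set c : B := 1 + (s : ℂ) • x with hc
  have hcsa : star c = c := by
    rw [hc, star_add, star_smul, star_one, hx.star_eq, Complex.star_def,
      Complex.conj_ofReal]
  have hccomm : ∀ a ∈ A, c * a = a * c := by
    intro a ha
    rw [hc, add_mul, mul_add, one_mul, mul_one, smul_mul_assoc, hxc a ha, mul_smul_comm]
  have hcx : c * x = x * c := by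
    rw [hc, add_mul, mul_add, one_mul, mul_one, smul_mul_assoc, mul_smul_comm]
  have hcc : c * c = 1 + α • x + β • (x * x) := by
    rw [hc, hα, hβ]
    push_cast
    simp only [add_mul, mul_add, one_mul, mul_one, smul_mul_smul_comm]
    module
  set d : B := 1 + α • e1 + β • e2 with hd
  have hdA : d ∈ A := by
    exact add_mem (add_mem (one_mem A) (SMulMemClass.smul_mem α he1A))
      (SMulMemClass.smul_mem β he2A)
  have hdcomm : ∀ a ∈ A, d * a = a * d := by
    intro a ha
    rw [hd, add_mul, add_mul, mul_add, mul_add, one_mul, mul_one, smul_mul_assoc,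
      smul_mul_assoc, he1c a ha, he2c a ha, mul_smul_comm, mul_smul_comm]
  have hdE : E (c * c) = d := by
    rw [hcc, hlin.map_add, hlin.map_add, hlin.map_smul, hlin.map_smul, E1, hd, he1, he2]
  have hαsa : star α = α := by rw [hα, Complex.star_def, Complex.conj_ofReal]
  have hβsa : star β = β := by rw [hβ, Complex.star_def, Complex.conj_ofReal]
  have hdsa : IsSelfAdjoint d := by
    rw [isSelfAdjoint_iff, hd, star_add, star_add, star_one, star_smul, star_smul,
      hαsa, hβsa, he1sa.star_eq, he2sa.star_eq]
  have hdnorm : ‖d - 1‖ < 1 := by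
    have hd1 : d - 1 = α • e1 + β • e2 := by rw [hd]; abel
    have hnα : ‖α‖ = 2 * |s| := by
      rw [hα, Complex.norm_real, Real.norm_eq_abs, abs_mul]; simp
    have hnβ : ‖β‖ = |s| ^ 2 := by
      rw [hβ, Complex.norm_real, Real.norm_eq_abs, abs_pow]
    calc ‖d - 1‖ ≤ ‖α • e1‖ + ‖β • e2‖ := by rw [hd1]; exact norm_add_le _ _
      _ = 2 * |s| * ‖e1‖ + |s| ^ 2 * ‖e2‖ := by rw [norm_smul, norm_smul, hnα, hnβ]
      _ < 1 := hsmall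
  obtain ⟨w, hw1, hwmem⟩ := my_exists_w hdsa hdnorm
  have hwA : w ∈ A := hwmem A hA hdA
  -- w commutes with A
  set S : StarSubalgebra ℂ B := StarSubalgebra.centralizer ℂ (A : Set B) with hS
  have hSclosed : IsClosed (S : Set B) := by
    rw [hS, StarSubalgebra.coe_centralizer]
    exact my_isClosed_centralizer _
  have hdS : d ∈ S := by
    rw [hS, StarSubalgebra.mem_centralizer_iff]
    intro g hg
    exact ⟨(hdcomm g hg).symm, (hdcomm (star g) (star_mem hg)).symm⟩
  have hwS : w ∈ S := hwmem S hSclosed hdS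
  have hwcomm : ∀ a ∈ A, w * a = a * w := by
    intro a ha
    exact ((StarSubalgebra.mem_centralizer_iff ℂ).mp hwS a ha).1.symm
  have hswcomm : ∀ a ∈ A, star w * a = a * star w := by
    intro a ha
    have := congrArg star (hwcomm (star a) (star_mem ha))
    rw [StarMul.star_mul, StarMul.star_mul, star_star] at this
    exact this.symm
  -- the perturbed conditional expectation
  set F : B → B := fun b => star w * E (c * b * c) * w with hF
  have hFcond : IsCondExp A F := by
    constructor
    · -- bounded linear
      let L : B →L[ℂ] B :=
        (ContinuousLinearMap.mulLeftRight ℂ B (star w) w).comp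
          ((hE.boundedLinear.toContinuousLinearMap).comp
            (ContinuousLinearMap.mulLeftRight ℂ B c c))
      have hFL : F = ⇑L := by
        funext b
        rfl
      rw [hFL]
      exact L.isBoundedLinearMap
    · intro b
      exact mul_mem (mul_mem (star_mem hwA) (hE.mem_of _)) hwA
    · intro a ha
      have h1 : c * a * c = a * (c * c) := by
        rw [hccomm a ha, mul_assoc]
      rw [hF]
      simp only
      rw [h1, hEl a ha, hdE]
      calc star w * (a * d) * w = (star w * a) * (d * w) := by simp only [mul_assoc]
        _ = (a * star w) * (w * d) := by rw [hswcomm a ha, ← hwcomm d hdA]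
        _ = a * (star w * w * d) := by simp only [mul_assoc]
        _ = a := by rw [hw1, mul_one]
    · intro b a ha a' ha'
      have h1 : c * (a * b * a') * c = a * (c * b * c) * a' := by
        calc c * (a * b * a') * c = (c * a) * b * (a' * c) := by
              simp only [mul_assoc]
          _ = (a * c) * b * (c * a') := by rw [hccomm a ha, ← hccomm a' ha']
          _ = a * (c * b * c) * a' := by simp only [mul_assoc]
      rw [hF]
      simp only
      rw [h1, hE.bimodular (c * b * c) a ha a' ha']
      calc star w * (a * E (c * b * c) * a') * w
          = ((a * star w * E (c * b * c)) * a') * w := by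
            simp only [← mul_assoc]
            rw [hswcomm a ha]
        _ = (a * star w * E (c * b * c)) * (w * a') := by
            rw [mul_assoc, ← hwcomm a' ha']
        _ = a * (star w * E (c * b * c) * w) * a' := by simp only [mul_assoc]
    · intro n M hM
      obtain ⟨N, hN⟩ := hM
      have hstarc : star (fun _ : Fin n => c) = fun _ : Fin n => c := by
        funext i; exact hcsa
      have hstarw : star (fun _ : Fin n => w) = fun _ : Fin n => star w := by
        funext i; rfl
      have h1 : M.map (fun b => c * b * c)
          = (N * diagonal (fun _ => c))ᴴ * (N * diagonal (fun _ => c)) := by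
        rw [conjTranspose_mul, diagonal_conjTranspose, hstarc]
        ext i j
        simp only [Matrix.map_apply, hN]
        rw [show diagonal (fun _ : Fin n => c) * Nᴴ * (N * diagonal fun _ : Fin n => c)
          = diagonal (fun _ : Fin n => c) * (Nᴴ * N) * diagonal (fun _ : Fin n => c) by
            simp only [Matrix.mul_assoc]]
        rw [Matrix.mul_diagonal, Matrix.diagonal_mul]
      obtain ⟨P, hP⟩ := hE.completelyPositive n (M.map fun b => c * b * c)
        ⟨N * diagonal (fun _ => c), h1⟩
      refine ⟨P * diagonal (fun _ => w), ?_⟩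
      rw [conjTranspose_mul, diagonal_conjTranspose, hstarw]
      rw [show diagonal (fun _ : Fin n => star w) * Pᴴ * (P * diagonal fun _ : Fin n => w)
        = diagonal (fun _ : Fin n => star w) * (Pᴴ * P) * diagonal (fun _ : Fin n => w) by
          simp only [Matrix.mul_assoc]]
      rw [← hP]
      ext i j
      rw [Matrix.mul_diagonal, Matrix.diagonal_mul]
      simp [Matrix.map_apply, hF]
  -- apply uniqueness
  have hFeq : F = E := huniq F hFcond
  have h9 : star w * E (c * x * c) * w = e1 := by
    have := congrFun hFeq x
    rw [hF] at this
    exact this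
  have hcxc : c * x * c = x * (c * c) := by rw [hcx, mul_assoc]
  have hxcc : x * (c * c) = x + α • (x * x) + β • (x * (x * x)) := by
    rw [hcc, mul_add, mul_add, mul_one, mul_smul_comm, mul_smul_comm]
  set y : B := e1 + α • e2 + β • E (x * (x * x)) with hy
  have hEy : E (c * x * c) = y := by
    rw [hcxc, hxcc, hlin.map_add, hlin.map_add, hlin.map_smul, hlin.map_smul, hy, he1, he2]
  have hyA : y ∈ A := by
    exact add_mem (add_mem he1A (SMulMemClass.smul_mem α he2A))
      (SMulMemClass.smul_mem β (hE.mem_of _))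
  have h10 : y * (star w * w) = e1 := by
    rw [← h9, hEy]
    calc y * (star w * w) = (y * star w) * w := by rw [mul_assoc]
      _ = star w * y * w := by rw [← hswcomm y hyA]
  have h11 : y = e1 * d := by
    have h := congrArg (fun z => z * d) h10
    rw [mul_assoc, hw1, mul_one] at h
    exact h
  have h12 : e1 * d = e1 + α • (e1 * e1) + β • (e1 * e2) := by
    rw [hd, mul_add, mul_add, mul_one, mul_smul_comm, mul_smul_comm]
  rw [h11, h12]

end Aux

/-- If a unital C*-inclusion `A ⊆ B` admits a unique conditional expectation `E`, then
`E (x ^ 2) = (E x) ^ 2` for every self-adjoint `x ∈ B` commuting with every element of `A`. -/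
theorem unique_condExp_sq_of_selfAdjoint_commutant
    {B : Type*} [CStarAlgebra B] (A : StarSubalgebra ℂ B)
    (hA : IsClosed (A : Set B)) (E : B → B) (hE : IsCondExp A E)
    (huniq : ∀ F : B → B, IsCondExp A F → F = E) :
    ∀ x : B, IsSelfAdjoint x → (∀ a ∈ A, x * a = a * x) →
      E (x ^ 2) = (E x) ^ 2 := by
  intro x hx hxc
  set t : ℝ := (2 * ‖E x‖ + ‖E (x * x)‖ + 1)⁻¹ with ht
  have hden : (0 : ℝ) < 2 * ‖E x‖ + ‖E (x * x)‖ + 1 := by positivity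
  have ht0 : 0 < t := by rw [ht]; positivity
  have ht1 : t ≤ 1 := by
    rw [ht]
    rw [inv_le_one_iff₀]
    right
    nlinarith [norm_nonneg (E x), norm_nonneg (E (x * x))]
  have hsmall : ∀ s : ℝ, |s| = t → 2 * |s| * ‖E x‖ + |s| ^ 2 * ‖E (x * x)‖ < 1 := by
    intro s hs
    rw [hs]
    have h2 : t ^ 2 ≤ t := by nlinarith
    have hmul : t * (2 * ‖E x‖ + ‖E (x * x)‖ + 1) = 1 := by
      rw [ht]; field_simp
    nlinarith [norm_nonneg (E x), norm_nonneg (E (x * x))]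
  have habs : |t| = t := abs_of_pos ht0
  have habs' : |(-t)| = t := by rw [abs_neg]; exact habs
  have h_t := my_key hA hE huniq x hx hxc t (hsmall t habs)
  have h_mt := my_key hA hE huniq x hx hxc (-t) (hsmall (-t) habs')
  have hneg : ((2 * (-t) : ℝ) : ℂ) = -((2 * t : ℝ) : ℂ) := by push_cast; ring
  have hsq : (((-t) ^ 2 : ℝ) : ℂ) = ((t ^ 2 : ℝ) : ℂ) := by push_cast; ring
  rw [hneg, hsq, neg_smul, neg_smul] at h_mt
  set P : B := ((2 * t : ℝ) : ℂ) • E (x * x) with hP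
  set R : B := ((2 * t : ℝ) : ℂ) • (E x * E x) with hR
  set Q : B := ((t ^ 2 : ℝ) : ℂ) • E (x * (x * x)) with hQ
  set U : B := ((t ^ 2 : ℝ) : ℂ) • (E x * E (x * x)) with hU
  -- h_t : E x + P + Q = E x + R + U ; h_mt : E x + -P + Q = E x + -R + U
  have hPR : P + P = R + R := by
    have hsum := congrArg₂ (fun u v : B => u - v) h_t h_mt
    have hl : (E x + P + Q) - (E x + -P + Q) = P + P := by abel
    have hr : (E x + R + U) - (E x + -R + U) = R + R := by abel
    rw [← hl, ← hr, hsum]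
  have hPReq : P = R := by
    have h3 : (2 : ℂ) • P = (2 : ℂ) • R := by
      rw [two_smul, two_smul, hPR]
    exact smul_right_injective B two_ne_zero h3
  have htne : ((2 * t : ℝ) : ℂ) ≠ 0 := by
    simp only [ne_eq, Complex.ofReal_eq_zero]
    positivity
  have hfinal : E (x * x) = E x * E x := by
    apply smul_right_injective B htne
    show ((2 * t : ℝ) : ℂ) • E (x * x) = ((2 * t : ℝ) : ℂ) • (E x * E x)
    exact hPReq
  rw [pow_two, pow_two, hfinal]
end

section
/- Let A be a unital C*-algebra, α a *-automorphism of A, and x ∈ A an element satisfying x a = α(a) x for all a ∈ A. Then x* x = x x*, and x* x belongs to the center of A (i.e., x* x commutes with every element of A). -/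
/-- If `x` is a dependent element for a *-automorphism `α` of a unital C*-algebra `A`
(i.e. `x * a = α a * x` for all `a`), then `x* x = x x*` and `x* x` is central. -/
theorem dependent_element_star_mul_self_central
    {A : Type*} [CStarAlgebra A] (α : A ≃⋆ₐ[ℂ] A) (x : A)
    (hx : ∀ a : A, x * a = α a * x) :
    star x * x = x * star x ∧ ∀ a : A, star x * x * a = a * (star x * x) := by
  -- adjoint version: a * x* = x* * α a
  have h1 : ∀ a : A, a * star x = star x * α a := by
    intro a
    have := congrArg star (hx (star a))
    simpa [star_mul, map_star] using this
  -- x* * a = α⁻¹ a * x*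
  have h2 : ∀ a : A, star x * a = α.symm a * star x := by
    intro a
    have := h1 (α.symm a)
    rw [α.apply_symm_apply] at this
    exact this.symm
  -- p := x* x is central
  have hp : ∀ a : A, star x * x * a = a * (star x * x) := by
    intro a
    calc star x * x * a = star x * (x * a) := by rw [mul_assoc]
      _ = star x * (α a * x) := by rw [hx a]
      _ = star x * α a * x := by rw [mul_assoc]
      _ = a * star x * x := by rw [h1 a]
      _ = a * (star x * x) := by rw [mul_assoc]
  -- q := x x* is central
  have hq : ∀ a : A, x * star x * a = a * (x * star x) := by
    intro a
    calc x * star x * a = x * (star x * a) := by rw [mul_assoc]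
      _ = x * (α.symm a * star x) := by rw [h2 a]
      _ = x * α.symm a * star x := by rw [mul_assoc]
      _ = α (α.symm a) * x * star x := by rw [hx (α.symm a)]
      _ = a * x * star x := by rw [α.apply_symm_apply]
      _ = a * (x * star x) := by rw [mul_assoc]
  set d : A := x * star x - star x * x with hd
  have hdx : d * x = 0 := by
    have h := hp x
    rw [hd, sub_mul, mul_assoc, sub_eq_zero, h]
  have hxd : x * d = 0 := by
    rw [hd, mul_sub, sub_eq_zero, ← hq x, mul_assoc]
  have hdd : d * d = 0 := by
    rw [hd, mul_sub]
    rw [show d * (x * star x) = d * x * star x from (mul_assoc _ _ _).symm, hdx, zero_mul]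
    rw [show d * (star x * x) = star x * x * d from (hp d).symm, mul_assoc, hxd, mul_zero,
      sub_zero]
  have hsd : star d = d := by
    rw [hd, star_sub, star_mul, star_mul, star_star]
  have hnorm : ‖d‖ * ‖d‖ = 0 := by
    rw [← CStarRing.norm_star_mul_self, hsd, hdd, norm_zero]
  have hd0 : d = 0 := by
    have : ‖d‖ = 0 := by
      rcases mul_self_eq_zero.mp hnorm with h
      exact h
    exact norm_eq_zero.mp this
  have heq : star x * x = x * star x := by
    have := sub_eq_zero.mp hd0
    exact this.symm
  exact ⟨heq, hp⟩
end

section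
/- Let X be a compact Hausdorff topological space, φ : X → X a homeomorphism, and let α be the *-automorphism of the C*-algebra C(X, ℂ) of continuous complex-valued functions on X given by α(f) = f ∘ φ. Then α is freely acting if and only if the fixed-point set {x ∈ X : φ(x) = x} has empty interior (i.e., φ is topologically free). -/
/-- For a homeomorphism `φ` of a compact Hausdorff space `X`, the induced *-automorphism
`f ↦ f ∘ φ` of `C(X, ℂ)` is freely acting if and only if the fixed-point set of `φ` has
empty interior (i.e. `φ` is topologically free). -/
theorem comp_homeomorph_freely_acting_iff_topologically_free
    {X : Type*} [TopologicalSpace X] [CompactSpace X] [T2Space X] (φ : X ≃ₜ X) :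
    (∀ g : C(X, ℂ), (∀ f : C(X, ℂ), g * f = f.comp (φ : C(X, X)) * g) → g = 0) ↔
      interior {x : X | φ x = x} = ∅ := by
  constructor
  · intro h
    by_contra hne
    obtain ⟨x, hx⟩ := Set.nonempty_iff_ne_empty.2 hne
    set U := interior {x : X | φ x = x}
    -- Urysohn: g = 0 on Uᶜ, g x = 1
    obtain ⟨g, hg0, hg1, -⟩ := exists_continuous_zero_one_of_isClosed
      (isOpen_interior.isClosed_compl) (isClosed_singleton (x := x))
      (by simpa [Set.disjoint_singleton_right] using hx)
    set gc : C(X, ℂ) := (ContinuousMap.mk Complex.ofReal Complex.continuous_ofReal).comp g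
    have hdep : ∀ f : C(X, ℂ), gc * f = f.comp (φ : C(X, X)) * gc := by
      intro f
      ext y
      simp only [ContinuousMap.mul_apply, ContinuousMap.comp_apply, gc, ContinuousMap.coe_mk]
      by_cases hy : g y = 0
      · simp [hy]
      · have hyU : y ∈ U := by
          by_contra hyU
          exact hy (hg0 hyU)
        have : φ y = y := interior_subset (s := {x : X | φ x = x}) hyU
        rw [this, mul_comm]
    have := h gc hdep
    have : gc x = 0 := by rw [this]; rfl
    simp [gc, hg1 rfl] at this
  · intro h g hg
    ext y
    simp only [ContinuousMap.zero_apply]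
    by_contra hy
    -- the support of g is open and contained in the fixed set
    have key : ∀ z : X, g z ≠ 0 → φ z = z := by
      intro z hz
      by_contra hfix
      obtain ⟨f, hf0, hf1, -⟩ := exists_continuous_zero_one_of_isClosed
        (isClosed_singleton (x := φ z)) (isClosed_singleton (x := z))
        (by simpa [Set.disjoint_singleton] using hfix)
      set fc : C(X, ℂ) := (ContinuousMap.mk Complex.ofReal Complex.continuous_ofReal).comp f
      have := congrArg (fun u : C(X, ℂ) => u z) (hg fc)
      simp only [ContinuousMap.mul_apply, ContinuousMap.comp_apply, fc,
        ContinuousMap.coe_mk, ContinuousMap.coe_coe, hf0 rfl, hf1 rfl] at this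
      simp at this
      exact hz this
    have hopen : IsOpen {z : X | g z ≠ 0} :=
      isOpen_compl_iff.2 (isClosed_eq g.continuous continuous_const) |>.mono (by rfl)
    have hsub : {z : X | g z ≠ 0} ⊆ {x : X | φ x = x} := fun z hz => key z hz
    have : y ∈ interior {x : X | φ x = x} :=
      interior_maximal hsub hopen hy
    rw [h] at this
    exact this
end

section
/- Let A ⊆ B be a unital C*-inclusion, G a group, and u : G → B a map into the unitaries of B with u(e) = 1 and u(g) u(h) = u(g h), such that u(g) a u(g)* ∈ A for all a ∈ A and g ∈ G. Suppose that for every g ≠ e the only element b ∈ A satisfying b a = (u(g) a u(g)*) b for all a ∈ A is b = 0, and that B is the closed linear span of {a · u(g) : a ∈ A, g ∈ G}. Then any two conditional expectations θ₁, θ₂ : B → A are equal. -/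
/-- Let `u : G → B` be a unitary representation of a group `G` in `B` normalizing `A`, such
that for every `g ≠ e` the inner automorphism `a ↦ u g * a * (u g)*` of `A` has no nonzero
dependent elements in `A`, and such that `B` is the closed linear span of `{a * u g}`. Then
any two conditional expectations `B → A` coincide. -/
theorem condExp_unique_of_free_unitary_action
    {B : Type*} [CStarAlgebra B] (A : StarSubalgebra ℂ B) (hA : IsClosed (A : Set B))
    {G : Type*} [Group G] (u : G → B)
    (huu : ∀ g : G, star (u g) * u g = 1 ∧ u g * star (u g) = 1)
    (hone : u 1 = 1) (hmul : ∀ g h : G, u g * u h = u (g * h))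
    (hnorm : ∀ g : G, ∀ a ∈ A, u g * a * star (u g) ∈ A)
    (hfree : ∀ g : G, g ≠ 1 → ∀ b ∈ A,
      (∀ a ∈ A, b * a = (u g * a * star (u g)) * b) → b = 0)
    (hspan : (Submodule.span ℂ {x : B | ∃ a ∈ A, ∃ g : G, x = a * u g}).topologicalClosure = ⊤)
    (θ₁ θ₂ : B → B) (hθ₁ : IsCondExp A θ₁) (hθ₂ : IsCondExp A θ₂) :
    θ₁ = θ₂ := by
  classical
  have key : ∀ θ : B → B, IsCondExp A θ → ∀ a ∈ A, ∀ g : G,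
      θ (a * u g) = if g = 1 then a else 0 := by
    intro θ hθ a ha g
    have hug : θ (u g) = if g = 1 then 1 else 0 := by
      split_ifs with hg
      · subst hg; rw [hone]; exact hθ.fixes 1 (one_mem A)
      · refine hfree g hg _ (hθ.mem_of _) ?_
        intro c hc
        have h1 : θ (u g * c) = θ (u g) * c := by
          have := hθ.bimodular (u g) 1 (one_mem A) c hc
          simpa using this
        have h2 : θ (u g * c) = (u g * c * star (u g)) * θ (u g) := by
          have heq : u g * c = (u g * c * star (u g)) * u g * 1 := by
            rw [mul_one, mul_assoc, (huu g).1, mul_one]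
          conv_lhs => rw [heq]
          rw [hθ.bimodular (u g) _ (hnorm g c hc) 1 (one_mem A), mul_one]
        rw [← h1, h2]
    calc θ (a * u g) = a * θ (u g) * 1 := by
          have := hθ.bimodular (u g) a ha 1 (one_mem A)
          simpa using this
      _ = _ := by rw [hug]; split_ifs <;> simp
  set T₁ := hθ₁.boundedLinear.toContinuousLinearMap with hT₁
  set T₂ := hθ₂.boundedLinear.toContinuousLinearMap with hT₂
  have hcoe₁ : ∀ x, T₁ x = θ₁ x := fun x => rfl
  have hcoe₂ : ∀ x, T₂ x = θ₂ x := fun x => rfl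
  set S : Set B := {x : B | ∃ a ∈ A, ∃ g : G, x = a * u g} with hS
  have hsub : (Submodule.span ℂ S : Set B) ⊆ {x | T₁ x = T₂ x} := by
    have hle : Submodule.span ℂ S ≤
        LinearMap.eqLocus (T₁ : B →ₗ[ℂ] B) (T₂ : B →ₗ[ℂ] B) := by
      rw [Submodule.span_le]
      rintro x ⟨a, ha, g, rfl⟩
      show T₁ (a * u g) = T₂ (a * u g)
      rw [hcoe₁, hcoe₂, key θ₁ hθ₁ a ha g, key θ₂ hθ₂ a ha g]
    intro x hx
    exact hle hx
  have hclosed : IsClosed {x : B | T₁ x = T₂ x} :=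
    isClosed_eq T₁.continuous T₂.continuous
  have hcl : closure ((Submodule.span ℂ S : Set B)) ⊆ {x | T₁ x = T₂ x} :=
    hclosed.closure_subset_iff.mpr hsub
  funext x
  have hx : x ∈ closure ((Submodule.span ℂ S : Set B)) := by
    rw [← Submodule.topologicalClosure_coe, hspan]
    trivial
  have := hcl hx
  rw [← hcoe₁, ← hcoe₂]
  exact this
end

section
/- Let A ⊆ B be a unital C*-inclusion, G a group, and u : G → B a map into the unitaries of B with u(e) = 1 and u(g) u(h) = u(g h), such that u(g) a u(g)* ∈ A for all a ∈ A and g ∈ G. Suppose E : B → A is a conditional expectation with E(u(g)) = 0 for every g ≠ e, and suppose that every x ∈ B satisfying x a = a x for all a ∈ A belongs to A. Then for every g ≠ e, the only element b ∈ A satisfying b a = (u(g) a u(g)*) b for all a ∈ A is b = 0. -/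
/-- Let `u : G → B` be a unitary representation of a group `G` in `B` normalizing `A`.
If some conditional expectation `E : B → A` kills `u g` for every `g ≠ e`, and the relative
commutant of `A` in `B` is contained in `A`, then for every `g ≠ e` the inner automorphism
`a ↦ u g * a * (u g)*` of `A` has no nonzero dependent elements in `A`. -/
theorem free_of_condExp_vanishing_and_trivial_commutant
    {B : Type*} [CStarAlgebra B] (A : StarSubalgebra ℂ B) (hA : IsClosed (A : Set B))
    {G : Type*} [Group G] (u : G → B)
    (huu : ∀ g : G, star (u g) * u g = 1 ∧ u g * star (u g) = 1)
    (hone : u 1 = 1) (hmul : ∀ g h : G, u g * u h = u (g * h))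
    (hnorm : ∀ g : G, ∀ a ∈ A, u g * a * star (u g) ∈ A)
    (E : B → B) (hE : IsCondExp A E) (hvanish : ∀ g : G, g ≠ 1 → E (u g) = 0)
    (hcomm : ∀ x : B, (∀ a ∈ A, x * a = a * x) → x ∈ A) :
    ∀ g : G, g ≠ 1 → ∀ b ∈ A, (∀ a ∈ A, b * a = (u g * a * star (u g)) * b) → b = 0 := by
  intro g hg b hb hdep
  set x := star (u g) * b with hx_def
  have hx : x ∈ A := by
    apply hcomm
    intro a ha
    calc x * a = star (u g) * (b * a) := by rw [mul_assoc]
      _ = star (u g) * (u g * a * star (u g) * b) := by rw [hdep a ha]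
      _ = star (u g) * u g * (a * (star (u g) * b)) := by
          simp only [mul_assoc]
      _ = a * x := by rw [(huu g).1, one_mul, hx_def]
  have hbx : b = u g * x := by
    rw [hx_def, ← mul_assoc, (huu g).2, one_mul]
  have hEb : E b = b := hE.fixes b hb
  have : E b = 0 := by
    rw [hbx]
    have h1 : E (1 * u g * x) = 1 * E (u g) * x :=
      hE.bimodular (u g) 1 (one_mem A) x hx
    rw [one_mul] at h1
    rw [h1, hvanish g hg, one_mul, zero_mul]
  rw [hEb] at this
  exact this
end
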